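/- Let E be a symmetric Banach function space on I=[0,α) with the Fatou property and let x∈E with x*(∞)=0. If x is an LKM point and an H_g point, then for every sequence (x_n)⊆E such that x_n**→x** in Lebesgue measure and ‖x_n‖_E→‖x‖_E, one has ‖x_n*−x*‖_E→0. -/

import Mathlib

open MeasureTheory Filter Topology Set
open scoped ENNReal Pointwise

noncomputable section

/-- Lebesgue measure restricted to the interval `I = [0, α)`, where `α : ℝ≥0∞`. -/
def muI (α : ℝ≥0∞) : Measure ℝ :=
  volume.restrict {s : ℝ | 0 ≤ s ∧ ENNReal.ofReal s < α}

/-- The distribution function `d_x(λ) = μ{s ∈ I : |x(s)| > λ}`. -/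
def distr (α : ℝ≥0∞) (x : ℝ → ℝ) (lam : ℝ) : ℝ≥0∞ :=
  muI α {s : ℝ | lam < |x s|}

/-- The decreasing rearrangement `x*(t) = inf{λ > 0 : d_x(λ) ≤ t}`. -/
def rearr (α : ℝ≥0∞) (x : ℝ → ℝ) (t : ℝ) : ℝ :=
  sInf {lam : ℝ | 0 < lam ∧ distr α x lam ≤ ENNReal.ofReal t}

/-- The maximal function `x**(t) = (1/t) ∫₀ᵗ x*(s) ds`. -/
def maxf (α : ℝ≥0∞) (x : ℝ → ℝ) (t : ℝ) : ℝ :=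
  (∫ s in Set.Ioc (0 : ℝ) t, rearr α x s) / t

/-- The Hardy–Littlewood–Pólya relation `x ≺ y`, i.e. `x**(t) ≤ y**(t)` for all `t > 0`. -/
def HLP (α : ℝ≥0∞) (x y : ℝ → ℝ) : Prop :=
  ∀ t : ℝ, 0 < t → maxf α x t ≤ maxf α y t

/-- `x*(∞) = 0`: automatic when `α ≠ ∞`, and `lim_{t→∞} x*(t) = 0` when `α = ∞`. -/
def rearrInftyZero (α : ℝ≥0∞) (x : ℝ → ℝ) : Prop :=
  α = ∞ → Tendsto (rearr α x) atTop (𝓝 0)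

/-- A symmetric Banach function space on `[0, α)` with the Fatou property. -/
structure SymmetricBFS (α : ℝ≥0∞) where
  /-- membership in the space `E` -/
  Mem : (ℝ → ℝ) → Prop
  /-- the norm of `E` -/
  N : (ℝ → ℝ) → ℝ
  mem_aemeasurable : ∀ ⦃x⦄, Mem x → AEMeasurable x (muI α)
  zero_mem : Mem 0
  add_mem : ∀ ⦃x y⦄, Mem x → Mem y → Mem (x + y)
  smul_mem : ∀ (c : ℝ) ⦃x⦄, Mem x → Mem (c • x)
  norm_nonneg' : ∀ x, 0 ≤ N x
  norm_zero' : N 0 = 0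
  norm_add_le : ∀ x y, N (x + y) ≤ N x + N y
  norm_smul' : ∀ (c : ℝ) (x : ℝ → ℝ), N (c • x) = |c| * N x
  norm_eq_zero_iff : ∀ ⦃x⦄, Mem x → (N x = 0 ↔ (∀ᵐ s ∂(muI α), x s = 0))
  /-- the ideal (Banach function space) property -/
  ideal : ∀ ⦃x y⦄, AEMeasurable x (muI α) → Mem y →
    (∀ᵐ s ∂(muI α), |x s| ≤ |y s|) → Mem x ∧ N x ≤ N y
  /-- there is a strictly positive element -/
  exists_strictPos : ∃ x, Mem x ∧ ∀ᵐ s ∂(muI α), 0 < x s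
  /-- norm completeness -/
  complete : ∀ u : ℕ → ℝ → ℝ, (∀ n, Mem (u n)) →
    (∀ ε : ℝ, 0 < ε → ∃ n₀ : ℕ, ∀ m n, n₀ ≤ m → n₀ ≤ n → N (u m - u n) < ε) →
    ∃ x, Mem x ∧ Tendsto (fun n => N (u n - x)) atTop (𝓝 0)
  /-- symmetry: equimeasurable functions have equal norms -/
  symmetric : ∀ ⦃x y⦄, AEMeasurable x (muI α) → Mem y →
    distr α x = distr α y → Mem x ∧ N x = N y
  /-- the Fatou property -/
  fatou : ∀ (u : ℕ → ℝ → ℝ) (x : ℝ → ℝ), (∀ n, Mem (u n)) →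
    AEMeasurable x (muI α) →
    (∀ n, ∀ᵐ s ∂(muI α), 0 ≤ u n s) →
    (∀ n, ∀ᵐ s ∂(muI α), u n s ≤ u (n + 1) s) →
    (∀ᵐ s ∂(muI α), Tendsto (fun n => u n s) atTop (𝓝 (x s))) →
    (∃ C : ℝ, ∀ n, N (u n) ≤ C) →
    Mem x ∧ Tendsto (fun n => N (u n)) atTop (𝓝 (N x))

variable {α : ℝ≥0∞}

/-- The fundamental function `φ(t) = ‖χ_{(0,t)}‖_E`. -/
def SymmetricBFS.fund (E : SymmetricBFS α) (t : ℝ) : ℝ :=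
  E.N (Set.indicator (Set.Ioo 0 t) fun _ => (1 : ℝ))

/-- `x` is a point of lower local uniform `K`-monotonicity (`LLUKM` point). -/
def SymmetricBFS.IsLLUKMPoint (E : SymmetricBFS α) (x : ℝ → ℝ) : Prop :=
  ∀ u : ℕ → ℝ → ℝ, (∀ n, E.Mem (u n)) → (∀ n, HLP α (u n) x) →
    Tendsto (fun n => E.N (u n)) atTop (𝓝 (E.N x)) →
    Tendsto (fun n => E.N (rearr α (u n) - rearr α x)) atTop (𝓝 0)

/-- `x` is a point of upper local uniform `K`-monotonicity (`ULUKM` point). -/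
def SymmetricBFS.IsULUKMPoint (E : SymmetricBFS α) (x : ℝ → ℝ) : Prop :=
  ∀ u : ℕ → ℝ → ℝ, (∀ n, E.Mem (u n)) → (∀ n, HLP α x (u n)) →
    Tendsto (fun n => E.N (u n)) atTop (𝓝 (E.N x)) →
    Tendsto (fun n => E.N (rearr α x - rearr α (u n))) atTop (𝓝 0)

/-- `x` is a point of lower `K`-monotonicity (`LKM` point). -/
def SymmetricBFS.IsLKMPoint (E : SymmetricBFS α) (x : ℝ → ℝ) : Prop :=
  ∀ y : ℝ → ℝ, E.Mem y → HLP α y x → rearr α y ≠ rearr α x → E.N y < E.N x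

/-- `x` is a point of order continuity. -/
def SymmetricBFS.IsOCPoint (E : SymmetricBFS α) (x : ℝ → ℝ) : Prop :=
  ∀ u : ℕ → ℝ → ℝ, (∀ n, E.Mem (u n)) →
    (∀ n, ∀ᵐ s ∂(muI α), 0 ≤ u n s ∧ u n s ≤ |x s|) →
    (∀ᵐ s ∂(muI α), Tendsto (fun n => u n s) atTop (𝓝 0)) →
    Tendsto (fun n => E.N (u n)) atTop (𝓝 0)

/-- `x` is a point of `K`-order continuity. -/
def SymmetricBFS.IsKOCPoint (E : SymmetricBFS α) (x : ℝ → ℝ) : Prop :=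
  ∀ u : ℕ → ℝ → ℝ, (∀ n, E.Mem (u n)) → (∀ n, HLP α (u n) x) →
    (∀ᵐ s ∂(muI α), Tendsto (fun n => rearr α (u n) s) atTop (𝓝 0)) →
    Tendsto (fun n => E.N (u n)) atTop (𝓝 0)

/-- `x` is an `H_g` point (Kadec–Klee point for global convergence in measure). -/
def SymmetricBFS.IsHgPoint (E : SymmetricBFS α) (x : ℝ → ℝ) : Prop :=
  ∀ u : ℕ → ℝ → ℝ, (∀ n, E.Mem (u n)) →
    TendstoInMeasure (muI α) u atTop x →
    Tendsto (fun n => E.N (u n)) atTop (𝓝 (E.N x)) →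
    Tendsto (fun n => E.N (u n - x)) atTop (𝓝 0)

/-- `x` is an `H_l` point (Kadec–Klee point for local convergence in measure). -/
def SymmetricBFS.IsHlPoint (E : SymmetricBFS α) (x : ℝ → ℝ) : Prop :=
  ∀ u : ℕ → ℝ → ℝ, (∀ n, E.Mem (u n)) →
    (∀ A : Set ℝ, muI α A < ∞ → TendstoInMeasure ((muI α).restrict A) u atTop x) →
    Tendsto (fun n => E.N (u n)) atTop (𝓝 (E.N x)) →
    Tendsto (fun n => E.N (u n - x)) atTop (𝓝 0)

/-- A nonnegative `x` is an `LLUM` point (point of lower local uniform monotonicity). -/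
def SymmetricBFS.IsLLUMPoint (E : SymmetricBFS α) (x : ℝ → ℝ) : Prop :=
  ∀ u : ℕ → ℝ → ℝ, (∀ n, E.Mem (u n)) →
    (∀ n, ∀ᵐ s ∂(muI α), 0 ≤ u n s ∧ u n s ≤ x s) →
    Tendsto (fun n => E.N (u n)) atTop (𝓝 (E.N x)) →
    Tendsto (fun n => E.N (u n - x)) atTop (𝓝 0)

/-- A nonnegative `x` is a `ULUM` point (point of upper local uniform monotonicity). -/
def SymmetricBFS.IsULUMPoint (E : SymmetricBFS α) (x : ℝ → ℝ) : Prop :=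
  ∀ u : ℕ → ℝ → ℝ, (∀ n, E.Mem (u n)) →
    (∀ n, ∀ᵐ s ∂(muI α), x s ≤ u n s) →
    Tendsto (fun n => E.N (u n)) atTop (𝓝 (E.N x)) →
    Tendsto (fun n => E.N (u n - x)) atTop (𝓝 0)

namespace Aux

variable {α : ℝ≥0∞} {x y : ℝ → ℝ} {lam t : ℝ}

/-- the base interval -/
def Iset (α : ℝ≥0∞) : Set ℝ := {s : ℝ | 0 ≤ s ∧ ENNReal.ofReal s < α}

lemma measurableSet_Iset (α : ℝ≥0∞) : MeasurableSet (Iset α) := by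
  have : Iset α = Ici (0:ℝ) ∩ (fun s => ENNReal.ofReal s) ⁻¹' (Set.Iio α) := by
    ext s; simp [Iset, and_comm]
  rw [this]
  exact measurableSet_Ici.inter (ENNReal.measurable_ofReal measurableSet_Iio)

lemma muI_def (α : ℝ≥0∞) : muI α = volume.restrict (Iset α) := rfl

lemma muI_apply (A : Set ℝ) : muI α A = volume (A ∩ Iset α) :=
  Measure.restrict_apply' (measurableSet_Iset α)

lemma muI_le_volume (A : Set ℝ) : muI α A ≤ volume A := by
  rw [muI_apply]; exact measure_mono inter_subset_left

lemma volume_Iset (α : ℝ≥0∞) : volume (Iset α) = α := by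
  by_cases hα : α = ∞
  · subst hα
    have : Iset ∞ = Ici (0:ℝ) := by
      ext s; simp [Iset]
    rw [this, Real.volume_Ici]
  · have : Iset α = Ico (0:ℝ) α.toReal := by
      ext s
      constructor
      · rintro ⟨h0, h1⟩
        exact ⟨h0, (ENNReal.ofReal_lt_iff_lt_toReal h0 hα).1 h1⟩
      · rintro ⟨h0, h1⟩
        exact ⟨h0, (ENNReal.ofReal_lt_iff_lt_toReal h0 hα).2 h1⟩
    rw [this, Real.volume_Ico, sub_zero, ENNReal.ofReal_toReal hα]

lemma muI_univ (α : ℝ≥0∞) : muI α univ = α := by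
  rw [muI_apply, univ_inter, volume_Iset]

lemma distr_le_univ : distr α x lam ≤ muI α univ := measure_mono (subset_univ _)

lemma distr_anti : Antitone (distr α x) := fun a b hab =>
  measure_mono (fun s hs => lt_of_le_of_lt hab hs)

lemma distr_congr (h : x =ᵐ[muI α] y) : distr α x = distr α y := by
  funext lam
  refine measure_congr ?_
  filter_upwards [h] with s hs
  change (lam < |x s|) = (lam < |y s|)
  rw [hs]

lemma distr_smul {c : ℝ} (hc : 0 < c) (x : ℝ → ℝ) (lam : ℝ) :
    distr α (c • x) lam = distr α x (lam / c) := by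
  unfold distr
  congr 1
  ext s
  simp only [Pi.smul_apply, smul_eq_mul, mem_setOf_eq, abs_mul, abs_of_pos hc]
  rw [div_lt_iff₀' hc]

lemma distr_right_continuous (x : ℝ → ℝ) (lam : ℝ) :
    distr α x lam = ⨆ n : ℕ, distr α x (lam + ((n:ℝ)+1)⁻¹) := by
  have hmono : Monotone (fun n : ℕ => {s : ℝ | lam + ((n:ℝ)+1)⁻¹ < |x s|}) := by
    intro n m hnm s hs
    simp only [mem_setOf_eq] at hs ⊢
    have : ((m:ℝ)+1)⁻¹ ≤ ((n:ℝ)+1)⁻¹ := by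
      apply inv_anti₀ (by positivity)
      exact_mod_cast add_le_add_left (Nat.cast_le.2 hnm) 1
    linarith
  have hU : {s : ℝ | lam < |x s|} = ⋃ n : ℕ, {s : ℝ | lam + ((n:ℝ)+1)⁻¹ < |x s|} := by
    ext s
    simp only [mem_setOf_eq, mem_iUnion]
    constructor
    · intro h
      obtain ⟨n, hn⟩ := exists_nat_one_div_lt (sub_pos.2 h)
      exact ⟨n, by rw [one_div] at hn; linarith⟩
    · rintro ⟨n, hn⟩
      have : (0:ℝ) < ((n:ℝ)+1)⁻¹ := by positivity
      linarith
  unfold distr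
  rw [hU, hmono.measure_iUnion]

/-- the set in the definition of rearr -/
def Sset (α : ℝ≥0∞) (x : ℝ → ℝ) (t : ℝ) : Set ℝ :=
  {lam : ℝ | 0 < lam ∧ distr α x lam ≤ ENNReal.ofReal t}

lemma rearr_eq (x : ℝ → ℝ) (t : ℝ) : rearr α x t = sInf (Sset α x t) := rfl

lemma Sset_bddBelow : BddBelow (Sset α x t) := ⟨0, fun y hy => hy.1.le⟩

lemma rearr_nonneg (x : ℝ → ℝ) (t : ℝ) : 0 ≤ rearr α x t :=
  Real.sInf_nonneg fun _ h => h.1.le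

lemma rearr_congr (h : distr α x = distr α y) : rearr α x = rearr α y := by
  unfold rearr; rw [h]

lemma rearr_le (hl : 0 < lam) (h : distr α x lam ≤ ENNReal.ofReal t) :
    rearr α x t ≤ lam :=
  csInf_le Sset_bddBelow ⟨hl, h⟩

lemma Sset_subset {s t : ℝ} (hst : s ≤ t) : Sset α x s ⊆ Sset α x t := fun lam hl =>
  ⟨hl.1, hl.2.trans (ENNReal.ofReal_le_ofReal hst)⟩

lemma rearr_anti (hne : (Sset α x s).Nonempty) (hst : s ≤ t) :
    rearr α x t ≤ rearr α x s :=
  csInf_le_csInf Sset_bddBelow hne (Sset_subset hst)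

lemma rearr_of_nonpos (x : ℝ → ℝ) (ht : t ≤ 0) : rearr α x t = rearr α x 0 := by
  unfold rearr
  rw [ENNReal.ofReal_eq_zero.2 ht, ENNReal.ofReal_zero]

lemma distr_le_of_lt (hl : 0 < lam) (hne : (Sset α x t).Nonempty)
    (hlt : rearr α x t < lam) : distr α x lam ≤ ENNReal.ofReal t := by
  obtain ⟨y, hy, hylt⟩ := exists_lt_of_csInf_lt hne hlt
  exact le_trans (distr_anti hylt.le) hy.2

lemma distr_le_of_le (hl : 0 < lam) (hne : (Sset α x t).Nonempty)
    (hle : rearr α x t ≤ lam) : distr α x lam ≤ ENNReal.ofReal t := by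
  rw [distr_right_continuous]
  refine iSup_le fun n => ?_
  refine distr_le_of_lt (by positivity) hne ?_
  have : (0:ℝ) < ((n:ℝ)+1)⁻¹ := by positivity
  linarith

lemma lt_rearr_iff (hl : 0 < lam) (hne : (Sset α x t).Nonempty) :
    lam < rearr α x t ↔ ENNReal.ofReal t < distr α x lam := by
  constructor
  · intro h
    by_contra hc
    push_neg at hc
    exact absurd (rearr_le hl hc) (not_le.2 h)
  · intro h
    by_contra hc
    push_neg at hc
    exact absurd (distr_le_of_le hl hne hc) (not_le.2 h)

lemma rearr_eq_zero (h : distr α x 0 ≤ ENNReal.ofReal t) : rearr α x t = 0 := by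
  refine le_antisymm ?_ (rearr_nonneg x t)
  by_contra h'
  push_neg at h'
  have h2 := rearr_le (half_pos h') (le_trans (distr_anti (le_of_lt (half_pos h'))) h)
  linarith

lemma rearr_pos (hne : (Sset α x t).Nonempty) (h : ENNReal.ofReal t < distr α x 0) :
    0 < rearr α x t := by
  rcases lt_or_ge 0 (rearr α x t) with h' | h'
  · exact h'
  have h0 : rearr α x t = 0 := le_antisymm h' (rearr_nonneg x t)
  exfalso
  have : distr α x 0 ≤ ENNReal.ofReal t := by
    rw [distr_right_continuous]
    refine iSup_le fun n => ?_
    refine distr_le_of_le (by positivity) hne ?_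
    rw [h0]; positivity
  exact absurd this (not_le.2 h)

lemma muI_singleton_zero (α : ℝ≥0∞) (c : ℝ) : muI α {c} = 0 :=
  le_antisymm (le_trans (muI_le_volume _) (by simp)) zero_le


lemma exists_distr_lt (hxm : Measurable x) {lam₀ : ℝ} (h0 : 0 < lam₀)
    (hfin : distr α x lam₀ ≠ ∞) {c : ℝ≥0∞} (hc : c ≠ 0) :
    ∃ K, 0 < K ∧ distr α x K < c := by
  have hmeas : ∀ b : ℝ, MeasurableSet {s : ℝ | b < |x s|} := by
    intro b
    exact hxm.abs measurableSet_Ioi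
  have hanti : Antitone (fun n : ℕ => {s : ℝ | lam₀ + n < |x s|}) := by
    intro n m hnm s hs
    simp only [mem_setOf_eq] at hs ⊢
    have : (n:ℝ) ≤ m := Nat.cast_le.2 hnm
    linarith
  have hempty : (⋂ n : ℕ, {s : ℝ | lam₀ + n < |x s|}) = ∅ := by
    ext s
    simp only [mem_iInter, mem_setOf_eq, mem_empty_iff_false, iff_false, not_forall, not_lt]
    obtain ⟨n, hn⟩ := exists_nat_gt (|x s| - lam₀)
    exact ⟨n, by linarith⟩
  have hiInf : (⨅ n : ℕ, distr α x (lam₀ + n)) = 0 := by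
    have hfin' : ∃ n : ℕ, muI α {s : ℝ | lam₀ + (n:ℝ) < |x s|} ≠ ∞ :=
      ⟨0, by simpa [distr] using hfin⟩
    have := hanti.measure_iInter (fun n => (hmeas _).nullMeasurableSet) hfin'
    rw [hempty] at this
    simpa [distr] using this.symm
  by_contra hcon
  push_neg at hcon
  have : c ≤ ⨅ n : ℕ, distr α x (lam₀ + n) := le_iInf fun n => by
    rcases le_or_gt c (distr α x (lam₀ + n)) with h | h
    · exact h
    · exact absurd h (not_lt.2 (hcon (lam₀ + n) (by positivity)))
  rw [hiInf] at this
  exact hc (le_antisymm this zero_le)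

lemma sset_nonempty_of (hxm : Measurable x) {lam₀ : ℝ} (h0 : 0 < lam₀)
    (hfin : distr α x lam₀ ≠ ∞) (ht : 0 < t) : (Sset α x t).Nonempty := by
  obtain ⟨K, hK, hKlt⟩ := exists_distr_lt hxm h0 hfin
    (c := ENNReal.ofReal t) (by simp [ENNReal.ofReal_eq_zero, not_le, ht])
  exact ⟨K, hK, hKlt.le⟩

lemma measurableSet_rearr_gt (x : ℝ → ℝ) (c : ℝ) :
    MeasurableSet {t : ℝ | c < rearr α x t} := by
  set S := {t : ℝ | c < rearr α x t} with hS
  have hsplit : S = (S ∩ Iic 0) ∪ (S ∩ Ioi 0) := by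
    ext t
    rcases le_or_gt t 0 with h | h
    · simp [h]
    · simp [h, not_le.2 h]
  have h1 : MeasurableSet (S ∩ Iic 0) := by
    by_cases hc : c < rearr α x 0
    · have : S ∩ Iic 0 = Iic 0 := by
        ext t
        simp only [hS, mem_inter_iff, mem_setOf_eq, mem_Iic, and_iff_right_iff_imp]
        intro ht
        rwa [rearr_of_nonpos x ht]
      rw [this]; exact measurableSet_Iic
    · have : S ∩ Iic 0 = ∅ := by
        ext t
        simp only [hS, mem_inter_iff, mem_setOf_eq, mem_Iic, mem_empty_iff_false, iff_false,
          not_and]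
        intro h ht
        rw [rearr_of_nonpos x ht] at h
        exact hc h
      rw [this]; exact MeasurableSet.empty
  have h2 : OrdConnected (S ∩ Ioi 0) := by
    constructor
    rintro t₁ ⟨h₁S, h₁p⟩ t₂ ⟨h₂S, h₂p⟩ t ⟨hl, hr⟩
    have htp : (0:ℝ) < t := lt_of_lt_of_le h₁p hl
    refine ⟨?_, htp⟩
    simp only [hS, mem_setOf_eq] at h₁S h₂S ⊢
    rcases lt_or_ge c 0 with hc | hc
    · exact lt_of_lt_of_le hc (rearr_nonneg x t)
    · by_cases hSne : (Sset α x t).Nonempty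
      · exact lt_of_lt_of_le h₂S (rearr_anti hSne hr)
      · exfalso
        rw [not_nonempty_iff_eq_empty] at hSne
        have : Sset α x t₁ = ∅ :=
          eq_empty_of_subset_empty (hSne ▸ Sset_subset hl)
        rw [rearr_eq, this, Real.sInf_empty] at h₁S
        exact absurd h₁S (not_lt.2 hc)
  rw [hsplit]
  exact h1.union h2.measurableSet

lemma measurable_rearr (x : ℝ → ℝ) : Measurable (rearr α x) := by
  apply measurable_of_Ioi
  intro c
  exact measurableSet_rearr_gt x c

lemma ae_pos_muI (α : ℝ≥0∞) : ∀ᵐ t ∂(muI α), 0 < t := by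
  have h1 : ∀ᵐ t ∂(muI α), t ∈ Iset α := ae_restrict_mem (measurableSet_Iset α)
  have h2 : ∀ᵐ t ∂(muI α), t ≠ 0 := by
    rw [ae_iff]
    refine measure_mono_null (fun t ht => ?_) (muI_singleton_zero α 0)
    simpa using ht
  filter_upwards [h1, h2] with t ht h0
  exact lt_of_le_of_ne ht.1 (Ne.symm h0)

lemma muI_ofReal_lt {D : ℝ≥0∞} (hD : D ≤ muI α univ) :
    muI α {t : ℝ | ENNReal.ofReal t < D} = D := by
  by_cases hD' : D = ∞
  · have hset : {t : ℝ | ENNReal.ofReal t < D} = univ := by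
      ext t; simp [hD', ENNReal.ofReal_lt_top]
    rw [hset]
    rw [hD'] at hD ⊢
    exact top_le_iff.1 hD
  · rw [muI_apply]
    have hset : {t : ℝ | ENNReal.ofReal t < D} ∩ Iset α = Ico 0 D.toReal := by
      ext t
      constructor
      · rintro ⟨h1, h2, _⟩
        exact ⟨h2, (ENNReal.ofReal_lt_iff_lt_toReal h2 hD').1 h1⟩
      · rintro ⟨h0, h1⟩
        have hof : ENNReal.ofReal t < D := (ENNReal.ofReal_lt_iff_lt_toReal h0 hD').2 h1
        exact ⟨hof, h0, lt_of_lt_of_le hof (hD.trans_eq (muI_univ α))⟩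
    rw [hset, Real.volume_Ico, sub_zero, ENNReal.ofReal_toReal hD']

lemma measure_rearr_gt_pos (hne : ∀ t, 0 < t → (Sset α x t).Nonempty)
    (hl : 0 < lam) : muI α {t : ℝ | lam < rearr α x t} = distr α x lam := by
  have hset : {t : ℝ | lam < rearr α x t} =ᵐ[muI α] {t : ℝ | ENNReal.ofReal t < distr α x lam} := by
    filter_upwards [ae_pos_muI α] with t ht
    change (lam < rearr α x t) = (ENNReal.ofReal t < distr α x lam)
    exact propext (lt_rearr_iff hl (hne t ht))
  rw [measure_congr hset]
  exact muI_ofReal_lt distr_le_univ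

lemma distr_rearr (hne : ∀ t, 0 < t → (Sset α x t).Nonempty) :
    distr α (rearr α x) = distr α x := by
  funext lam
  rcases lt_trichotomy lam 0 with h | h | h
  · have huniv : ∀ g : ℝ → ℝ, distr α g lam = muI α univ := by
      intro g
      unfold distr
      congr 1
      ext s
      simp [lt_of_lt_of_le h (abs_nonneg _)]
    rw [huniv, huniv]
  · subst h
    have habs : {s : ℝ | 0 < |rearr α x s|} = {t : ℝ | 0 < rearr α x t} := by
      ext t; simp only [mem_setOf_eq, abs_of_nonneg (rearr_nonneg x t)]
    have hU : {t : ℝ | 0 < rearr α x t} = ⋃ q : ℕ, {t : ℝ | ((q:ℝ)+1)⁻¹ < rearr α x t} := by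
      ext t
      simp only [mem_setOf_eq, mem_iUnion]
      constructor
      · intro h
        obtain ⟨q, hq⟩ := exists_nat_one_div_lt h
        exact ⟨q, by rw [one_div] at hq; exact hq⟩
      · rintro ⟨q, hq⟩
        exact lt_trans (by positivity) hq
    have hmono : Monotone (fun q : ℕ => {t : ℝ | ((q:ℝ)+1)⁻¹ < rearr α x t}) := by
      intro n m hnm t hs
      simp only [mem_setOf_eq] at hs ⊢
      refine lt_of_le_of_lt ?_ hs
      apply inv_anti₀ (by positivity)
      exact_mod_cast add_le_add_left (Nat.cast_le.2 hnm) 1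
    calc distr α (rearr α x) 0 = muI α {t : ℝ | 0 < rearr α x t} := by
          unfold distr; rw [habs]
      _ = ⨆ q : ℕ, muI α {t : ℝ | ((q:ℝ)+1)⁻¹ < rearr α x t} := by
          rw [hU, hmono.measure_iUnion]
      _ = ⨆ q : ℕ, distr α x (((q:ℝ)+1)⁻¹) := by
          congr 1
          funext q
          exact measure_rearr_gt_pos hne (by positivity)
      _ = distr α x 0 := by
          rw [distr_right_continuous x 0]
          congr 1
          funext q
          rw [zero_add]
  · have habs : {s : ℝ | lam < |rearr α x s|} = {t : ℝ | lam < rearr α x t} := by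
      ext t; simp [abs_of_nonneg (rearr_nonneg x t)]
    calc distr α (rearr α x) lam = muI α {t : ℝ | lam < rearr α x t} := by
          unfold distr; rw [habs]
      _ = distr α x lam := measure_rearr_gt_pos hne h

lemma rearr_two_smul (x : ℝ → ℝ) (t : ℝ) :
    rearr α ((2:ℝ) • x) t = 2 * rearr α x t := by
  have hS : Sset α ((2:ℝ) • x) t = (2:ℝ) • (Sset α x t) := by
    ext lam
    rw [Set.mem_smul_set_iff_inv_smul_mem₀ (by norm_num : (2:ℝ) ≠ 0)]
    simp only [Sset, mem_setOf_eq, smul_eq_mul]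
    rw [distr_smul (by norm_num : (0:ℝ) < 2)]
    constructor
    · rintro ⟨h1, h2⟩
      exact ⟨by linarith, by rw [show (2:ℝ)⁻¹ * lam = lam / 2 by ring]; exact h2⟩
    · rintro ⟨h1, h2⟩
      exact ⟨by linarith, by rw [show lam / 2 = (2:ℝ)⁻¹ * lam by ring]; exact h2⟩
  rw [rearr_eq, hS, Real.sInf_smul_of_nonneg (by norm_num : (0:ℝ) ≤ 2), smul_eq_mul, rearr_eq]


section Slope

variable {f : ℝ → ℝ} {a b : ℝ}

lemma integrableOn_Ioc_extend (hm : Measurable f) (hnn : ∀ u, 0 ≤ f u)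
    (hanti : ∀ ⦃s t : ℝ⦄, 0 < s → s ≤ t → f t ≤ f s) (ha : 0 < a)
    (hint : IntegrableOn f (Ioc 0 a) volume) (b : ℝ) :
    IntegrableOn f (Ioc 0 b) volume := by
  rcases le_or_gt b a with h | h
  · exact hint.mono_set (Ioc_subset_Ioc_right h)
  · have h2 : IntegrableOn f (Ioc a b) volume := by
      apply Measure.integrableOn_of_bounded (M := f a)
      · rw [Real.volume_Ioc]; exact ENNReal.ofReal_ne_top
      · exact hm.aestronglyMeasurable
      · refine (ae_restrict_mem measurableSet_Ioc).mono (fun u hu => ?_)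
        rw [Real.norm_eq_abs, abs_of_nonneg (hnn u)]
        exact hanti ha hu.1.le
    have hU : Ioc 0 b = Ioc 0 a ∪ Ioc a b := (Ioc_union_Ioc_eq_Ioc ha.le h.le).symm
    rw [hU]
    exact hint.union h2

lemma integral_Ioc_split (hint : IntegrableOn f (Ioc 0 b) volume) (h0 : 0 ≤ a) (hab : a ≤ b) :
    ∫ u in Ioc 0 b, f u = (∫ u in Ioc 0 a, f u) + ∫ u in Ioc a b, f u := by
  have hU : Ioc 0 b = Ioc 0 a ∪ Ioc a b := (Ioc_union_Ioc_eq_Ioc h0 hab).symm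
  rw [hU] at hint ⊢
  rw [setIntegral_union (Ioc_disjoint_Ioc_of_le le_rfl) measurableSet_Ioc
    (hint.mono_set subset_union_left) (hint.mono_set subset_union_right)]

lemma integral_Ioc_le_const (hanti : ∀ ⦃s t : ℝ⦄, 0 < s → s ≤ t → f t ≤ f s)
    (h0 : 0 < a) (hab : a ≤ b) (hint2 : IntegrableOn f (Ioc a b) volume) :
    ∫ u in Ioc a b, f u ≤ (b - a) * f a := by
  have h1 : ∫ u in Ioc a b, f u ≤ ∫ _u in Ioc a b, f a := by
    refine setIntegral_mono_on hint2 ?_ measurableSet_Ioc (fun u hu => hanti h0 hu.1.le)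
    refine integrableOn_const ?_
    rw [Real.volume_Ioc]; exact ENNReal.ofReal_ne_top
  refine h1.trans ?_
  rw [setIntegral_const, Real.volume_real_Ioc_of_le hab, smul_eq_mul]

lemma const_le_integral_Ioc (hanti : ∀ ⦃s t : ℝ⦄, 0 < s → s ≤ t → f t ≤ f s)
    (h0 : 0 ≤ a) (hab : a ≤ b) (hint2 : IntegrableOn f (Ioc a b) volume) :
    (b - a) * f b ≤ ∫ u in Ioc a b, f u := by
  have h1 : ∫ _u in Ioc a b, f b ≤ ∫ u in Ioc a b, f u := by
    refine setIntegral_mono_on ?_ hint2 measurableSet_Ioc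
      (fun u hu => hanti (lt_of_le_of_lt h0 hu.1) hu.2)
    refine integrableOn_const ?_
    rw [Real.volume_Ioc]; exact ENNReal.ofReal_ne_top
  refine le_trans (le_of_eq ?_) h1
  rw [setIntegral_const, Real.volume_real_Ioc_of_le hab, smul_eq_mul]

end Slope

section Ptwise

variable {v : ℕ → ℝ → ℝ} {g : ℝ → ℝ}

lemma ptwise_conv
    (hvnn : ∀ n u, 0 ≤ v n u)
    (hvanti : ∀ n, ∀ ⦃s t : ℝ⦄, 0 < s → s ≤ t → v n t ≤ v n s)
    (hganti : ∀ ⦃s t : ℝ⦄, 0 < s → s ≤ t → g t ≤ g s)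
    (hgint : ∀ T, IntegrableOn g (Ioc 0 T) volume)
    {D : Set ℝ} (hD0 : D ⊆ Ioi 0)
    (hDrange : ∀ u ∈ D, ENNReal.ofReal u < α)
    (hDconv : ∀ t ∈ D, Tendsto (fun n => ∫ u in Ioc 0 t, v n u) atTop (𝓝 (∫ u in Ioc 0 t, g u)))
    (hDdense : ∀ a b : ℝ, 0 < a → a < b → ENNReal.ofReal a < α → (D ∩ Ioo a b).Nonempty)
    (hvint : ∀ᶠ n in atTop, ∀ T, IntegrableOn (v n) (Ioc 0 T) volume)
    {t : ℝ} (ht : 0 < t) (htα : ENNReal.ofReal t < α) (hcont : ContinuousAt g t) :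
    Tendsto (fun n => v n t) atTop (𝓝 (g t)) := by
  rw [Metric.tendsto_atTop]
  intro ε hε
  obtain ⟨δ, hδ0, hδ⟩ := Metric.continuousAt_iff.1 hcont (ε/2) (half_pos hε)
  set δ' := min δ (t/2) with hδ'def
  have hδ'0 : 0 < δ' := lt_min hδ0 (half_pos ht)
  have hδ'δ : δ' ≤ δ := min_le_left _ _
  have hδ't : δ' ≤ t/2 := min_le_right _ _
  have ha1 : 0 < t - δ' := by linarith
  obtain ⟨p', hp'D, hp'⟩ := hDdense (t - δ') t ha1 (by linarith)
    (lt_of_le_of_lt (ENNReal.ofReal_le_ofReal (by linarith)) htα)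
  obtain ⟨q', hq'D, hq'⟩ := hDdense p' t (hD0 hp'D) hp'.2 (hDrange _ hp'D)
  obtain ⟨p, hpD, hp⟩ := hDdense t (t + δ') ht (by linarith) htα
  obtain ⟨q, hqD, hq⟩ := hDdense p (t + δ') (hD0 hpD) hp.2 (hDrange _ hpD)
  have hp'0 : (0:ℝ) < p' := hD0 hp'D
  have hq'0 : (0:ℝ) < q' := hD0 hq'D
  have hp'q' : p' < q' := hq'.1
  have hq't : q' < t := hq'.2
  have htp : t < p := hp.1
  have hpq : p < q := hq.1
  have hqt : q < t + δ' := hq.2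
  -- g bounds from continuity
  have hgp' : g p' < g t + ε/2 := by
    have h1 : dist p' t < δ := by
      rw [Real.dist_eq, abs_of_nonpos (by linarith : p' - t ≤ 0)]
      have := hp'.1
      linarith
    have := hδ h1
    rw [Real.dist_eq, abs_sub_lt_iff] at this
    linarith [this.1]
  have hgq : g t - ε/2 < g q := by
    have h1 : dist q t < δ := by
      rw [Real.dist_eq, abs_of_nonneg (by linarith : 0 ≤ q - t)]
      linarith
    have := hδ h1
    rw [Real.dist_eq, abs_sub_lt_iff] at this
    linarith [this.2]
  -- upper bound sequence
  have hgsplit1 : (∫ u in Ioc 0 q', g u) - (∫ u in Ioc 0 p', g u) = ∫ u in Ioc p' q', g u := by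
    rw [integral_Ioc_split (hgint q') hp'0.le hp'q'.le]; ring
  have hgub : (∫ u in Ioc p' q', g u) ≤ (q' - p') * g p' :=
    integral_Ioc_le_const hganti hp'0 hp'q'.le ((hgint q').mono_set (Ioc_subset_Ioc_left hp'0.le))
  have hgsplit2 : (∫ u in Ioc 0 q, g u) - (∫ u in Ioc 0 p, g u) = ∫ u in Ioc p q, g u := by
    rw [integral_Ioc_split (hgint q) (hD0 hpD).le hpq.le]; ring
  have hglb : (q - p) * g q ≤ ∫ u in Ioc p q, g u :=
    const_le_integral_Ioc hganti (hD0 hpD).le hpq.le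
      ((hgint q).mono_set (Ioc_subset_Ioc_left (hD0 hpD).le))
  have hTu : Tendsto (fun n => ((∫ u in Ioc 0 q', v n u) - ∫ u in Ioc 0 p', v n u) / (q' - p'))
      atTop (𝓝 (((∫ u in Ioc 0 q', g u) - ∫ u in Ioc 0 p', g u) / (q' - p'))) :=
    ((hDconv q' hq'D).sub (hDconv p' hp'D)).div_const _
  have hTl : Tendsto (fun n => ((∫ u in Ioc 0 q, v n u) - ∫ u in Ioc 0 p, v n u) / (q - p))
      atTop (𝓝 (((∫ u in Ioc 0 q, g u) - ∫ u in Ioc 0 p, g u) / (q - p))) :=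
    ((hDconv q hqD).sub (hDconv p hpD)).div_const _
  have hLu : ((∫ u in Ioc 0 q', g u) - ∫ u in Ioc 0 p', g u) / (q' - p') < g t + ε/2 := by
    rw [hgsplit1]
    refine lt_of_le_of_lt ?_ hgp'
    rw [div_le_iff₀ (by linarith : (0:ℝ) < q' - p')]
    linarith [hgub]
  have hLl : g t - ε/2 < ((∫ u in Ioc 0 q, g u) - ∫ u in Ioc 0 p, g u) / (q - p) := by
    rw [hgsplit2]
    refine lt_of_lt_of_le hgq ?_
    rw [le_div_iff₀ (by linarith : (0:ℝ) < q - p)]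
    linarith [hglb]
  have ev1 : ∀ᶠ n in atTop,
      ((∫ u in Ioc 0 q', v n u) - ∫ u in Ioc 0 p', v n u) / (q' - p') < g t + ε/2 :=
    hTu.eventually_lt_const hLu
  have ev2 : ∀ᶠ n in atTop,
      g t - ε/2 < ((∫ u in Ioc 0 q, v n u) - ∫ u in Ioc 0 p, v n u) / (q - p) :=
    hTl.eventually_const_lt hLl
  have evAll : ∀ᶠ n in atTop, dist (v n t) (g t) < ε := by
    filter_upwards [ev1, ev2, hvint] with n h1 h2 hint
    have hub : v n t < g t + ε/2 := by
      have hv1 : v n t ≤ v n q' := hvanti n hq'0 hq't.le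
      have hsplit : (∫ u in Ioc 0 q', v n u) - (∫ u in Ioc 0 p', v n u)
          = ∫ u in Ioc p' q', v n u := by
        rw [integral_Ioc_split (hint q') hp'0.le hp'q'.le]; ring
      have hv2 : (q' - p') * v n q' ≤ ∫ u in Ioc p' q', v n u :=
        const_le_integral_Ioc (hvanti n) hp'0.le hp'q'.le
          ((hint q').mono_set (Ioc_subset_Ioc_left hp'0.le))
      have : v n q' ≤ ((∫ u in Ioc 0 q', v n u) - ∫ u in Ioc 0 p', v n u) / (q' - p') := by
        rw [hsplit, le_div_iff₀ (by linarith : (0:ℝ) < q' - p')]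
        linarith [hv2]
      linarith
    have hlb : g t - ε/2 < v n t := by
      have hv1 : v n p ≤ v n t := hvanti n ht htp.le
      have hsplit : (∫ u in Ioc 0 q, v n u) - (∫ u in Ioc 0 p, v n u)
          = ∫ u in Ioc p q, v n u := by
        rw [integral_Ioc_split (hint q) (hD0 hpD).le hpq.le]; ring
      have hv2 : (∫ u in Ioc p q, v n u) ≤ (q - p) * v n p :=
        integral_Ioc_le_const (hvanti n) (hD0 hpD) hpq.le
          ((hint q).mono_set (Ioc_subset_Ioc_left (hD0 hpD).le))
      have : ((∫ u in Ioc 0 q, v n u) - ∫ u in Ioc 0 p, v n u) / (q - p) ≤ v n p := by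
        rw [hsplit, div_le_iff₀ (by linarith : (0:ℝ) < q - p)]
        linarith [hv2]
      linarith
    rw [Real.dist_eq, abs_sub_lt_iff]
    constructor <;> linarith
  obtain ⟨N, hN⟩ := eventually_atTop.1 evAll
  exact ⟨N, hN⟩

end Ptwise

section InMeasure

variable {v : ℕ → ℝ → ℝ} {g : ℝ → ℝ}

lemma abs_sub_le_max {a b : ℝ} (ha : 0 ≤ a) (hb : 0 ≤ b) : |a - b| ≤ max a b := by
  rw [abs_sub_le_iff]
  constructor
  · linarith [le_max_left a b]
  · linarith [le_max_right a b]

lemma countable_discont (hganti : ∀ ⦃s t : ℝ⦄, 0 < s → s ≤ t → g t ≤ g s) :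
    volume {t : ℝ | 0 < t ∧ ¬ContinuousAt g t} = 0 := by
  have hsub : {t : ℝ | 0 < t ∧ ¬ContinuousAt g t} ⊆
      ⋃ K : ℕ, {u : ℝ | ¬ContinuousAt (fun t => g (max t (((K:ℝ)+1)⁻¹))) u} := by
    rintro t ⟨ht, hcont⟩
    obtain ⟨K, hK⟩ := exists_nat_one_div_lt ht
    rw [one_div] at hK
    refine mem_iUnion.2 ⟨K, ?_⟩
    simp only [mem_setOf_eq]
    intro hc
    apply hcont
    have heq : (fun u => g (max u (((K:ℝ)+1)⁻¹))) =ᶠ[𝓝 t] g := by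
      refine eventually_of_mem (Ioi_mem_nhds hK) (fun u hu => ?_)
      show g (max u _) = g u
      rw [max_eq_left (le_of_lt hu)]
    exact (continuousAt_congr heq).1 hc
  refine measure_mono_null hsub ?_
  refine Set.Countable.measure_zero ?_ _
  refine countable_iUnion (fun K => ?_)
  have hanti : Antitone (fun t => g (max t (((K:ℝ)+1)⁻¹))) := by
    intro t₁ t₂ h12
    exact hganti (lt_of_lt_of_le (by positivity) (le_max_right _ _))
      (max_le_max h12 le_rfl)
  exact hanti.countable_not_continuousAt

lemma tendstoInMeasure_of_ptwise (hα : α = 1 ∨ α = ∞)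
    (hvm : ∀ n, Measurable (v n)) (hvnn : ∀ n u, 0 ≤ v n u)
    (hvanti : ∀ n, ∀ ⦃s t : ℝ⦄, 0 < s → s ≤ t → v n t ≤ v n s)
    (hgm : Measurable g) (hgnn : ∀ u, 0 ≤ g u)
    (hganti : ∀ ⦃s t : ℝ⦄, 0 < s → s ≤ t → g t ≤ g s)
    (hptw : ∀ t, 0 < t → ENNReal.ofReal t < α → ContinuousAt g t →
      Tendsto (fun n => v n t) atTop (𝓝 (g t)))
    (htail : α = ∞ → Tendsto g atTop (𝓝 0)) :
    TendstoInMeasure (muI α) v atTop g := by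
  have hBnull : volume {t : ℝ | 0 < t ∧ ¬ContinuousAt g t} = 0 := countable_discont hganti
  rcases hα with hα | hα
  · subst hα
    haveI : IsFiniteMeasure (muI 1) := ⟨by rw [muI_univ]; exact ENNReal.one_lt_top⟩
    refine tendstoInMeasure_of_tendsto_ae (fun n => (hvm n).aestronglyMeasurable) ?_
    have h3 : (muI 1) {t : ℝ | 0 < t ∧ ¬ContinuousAt g t} = 0 :=
      le_antisymm (le_trans (muI_le_volume _) (le_of_eq hBnull)) zero_le
    filter_upwards [ae_pos_muI 1, ae_restrict_mem (measurableSet_Iset 1),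
      (measure_eq_zero_iff_ae_notMem.1 h3)] with t ht htI htB
    refine hptw t ht htI.2 ?_
    by_contra hc
    exact htB ⟨ht, hc⟩
  · subst hα
    rw [tendstoInMeasure_iff_dist]
    intro ε hε
    obtain ⟨T₀, hT₀⟩ := Metric.tendsto_atTop.1 (htail rfl) (ε/2) (half_pos hε)
    have hIoo : ¬ (Ioo (max T₀ 0) (max T₀ 0 + 1) ⊆ {t : ℝ | 0 < t ∧ ¬ContinuousAt g t}) := by
      intro hsub
      have := measure_mono_null hsub hBnull
      rw [Real.volume_Ioo] at this
      simp at this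
    obtain ⟨T, hTmem, hTB⟩ := not_subset.1 hIoo
    have hT0 : 0 < T := lt_of_le_of_lt (le_max_right T₀ 0) hTmem.1
    have hTcont : ContinuousAt g T := by
      by_contra hc
      exact hTB ⟨hT0, hc⟩
    have hgT : g T < ε/2 := by
      have := hT₀ T (le_of_lt (lt_of_le_of_lt (le_max_left T₀ 0) hTmem.1))
      rw [Real.dist_eq, sub_zero, abs_of_nonneg (hgnn T)] at this
      exact this
    have evT : ∀ᶠ n in atTop, v n T < ε := by
      refine (hptw T hT0 (by simp) hTcont).eventually_lt_const ?_
      linarith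
    -- finite part
    set ρ := volume.restrict (Icc (0:ℝ) T) with hρdef
    haveI : IsFiniteMeasure ρ := by
      constructor
      rw [hρdef, Measure.restrict_apply_univ, Real.volume_Icc]
      exact ENNReal.ofReal_lt_top
    have hρnull : ρ {t : ℝ | 0 < t ∧ ¬ContinuousAt g t} = 0 :=
      le_antisymm (le_trans (Measure.restrict_le_self _) (le_of_eq hBnull)) zero_le
    have hρ0 : ρ {(0:ℝ)} = 0 :=
      le_antisymm (le_trans (Measure.restrict_le_self _) (by simp)) zero_le
    have hρ : TendstoInMeasure ρ v atTop g := by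
      refine tendstoInMeasure_of_tendsto_ae (fun n => (hvm n).aestronglyMeasurable) ?_
      filter_upwards [ae_restrict_mem measurableSet_Icc,
        measure_eq_zero_iff_ae_notMem.1 hρnull, measure_eq_zero_iff_ae_notMem.1 hρ0] with t htI htB ht0
      have htpos : 0 < t := lt_of_le_of_ne htI.1 (fun h => ht0 (by simp [← h]))
      refine hptw t htpos (by simp) ?_
      by_contra hc
      exact htB ⟨htpos, hc⟩
    have hρε := tendstoInMeasure_iff_dist.1 hρ ε hε
    refine tendsto_of_tendsto_of_tendsto_of_le_of_le'
      (tendsto_const_nhds : Tendsto (fun _ : ℕ => (0:ℝ≥0∞)) atTop (𝓝 0)) hρε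
      (Filter.Eventually.of_forall (fun n => zero_le)) ?_
    filter_upwards [evT] with n hn
    have hsub : {s : ℝ | ε ≤ dist (v n s) (g s)} ∩ Iset ∞ ⊆
        {s : ℝ | ε ≤ dist (v n s) (g s)} ∩ Icc 0 T := by
      rintro s ⟨hsE, hsI⟩
      refine ⟨hsE, hsI.1, ?_⟩
      by_contra hc
      push_neg at hc
      have h1 : v n s ≤ v n T := hvanti n hT0 hc.le
      have h2 : g s ≤ g T := hganti hT0 hc.le
      have : dist (v n s) (g s) < ε := by
        rw [Real.dist_eq]
        refine lt_of_le_of_lt (abs_sub_le_max (hvnn n s) (hgnn s)) ?_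
        rw [max_lt_iff]
        constructor
        · exact lt_of_le_of_lt h1 hn
        · linarith
      exact absurd this (not_lt.2 hsE)
    calc muI ∞ {s : ℝ | ε ≤ dist (v n s) (g s)}
        = volume ({s : ℝ | ε ≤ dist (v n s) (g s)} ∩ Iset ∞) := muI_apply _
      _ ≤ volume ({s : ℝ | ε ≤ dist (v n s) (g s)} ∩ Icc 0 T) := measure_mono hsub
      _ = ρ {s : ℝ | ε ≤ dist (v n s) (g s)} := (Measure.restrict_apply' measurableSet_Icc).symm

end InMeasure

section CDF

lemma cdf_min {A : Set ℝ} (hA : MeasurableSet A) (hA0 : A ⊆ Ici 0) (c : ℝ≥0∞) :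
    volume (A ∩ {s : ℝ | volume (A ∩ Iio s) < c}) = min c (volume A) := by
  set f : ℝ → ℝ≥0∞ := fun s => volume (A ∩ Iio s) with hfdef
  have hfmono : Monotone f := fun s t hst =>
    measure_mono (inter_subset_inter_right _ (Iio_subset_Iio hst))
  have hffin : ∀ s, f s ≠ ∞ := by
    intro s
    have hle : f s ≤ volume (Ico (0:ℝ) (max s 0)) := by
      refine measure_mono (fun u hu => ?_)
      exact ⟨hA0 hu.1, lt_of_lt_of_le hu.2 (le_max_left s 0)⟩
    refine ne_top_of_le_ne_top ?_ hle
    rw [Real.volume_Ico]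
    exact ENNReal.ofReal_ne_top
  by_cases hc0 : c = 0
  · subst hc0
    have h1 : {s : ℝ | volume (A ∩ Iio s) < 0} = ∅ := by ext s; simp
    have h2 : min (0:ℝ≥0∞) (volume A) = 0 := min_eq_left zero_le
    rw [h1, inter_empty, measure_empty, h2]
  have hcpos : 0 < c := pos_iff_ne_zero.2 hc0
  set U := {s : ℝ | f s < c} with hUdef
  have hUlow : ∀ s t : ℝ, s ≤ t → t ∈ U → s ∈ U := fun s t hst ht =>
    lt_of_le_of_lt (hfmono hst) ht
  have hU0 : ∀ s : ℝ, s ≤ 0 → s ∈ U := by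
    intro s hs
    have : A ∩ Iio s = ∅ := by
      ext u
      simp only [mem_inter_iff, mem_Iio, mem_empty_iff_false, iff_false, not_and, not_lt]
      intro hu
      exact le_trans hs (hA0 hu)
    simp only [hUdef, mem_setOf_eq, hfdef, this, measure_empty]
    exact hcpos
  by_cases hUuniv : ∀ s : ℝ, s ∈ U
  · have hAU : A ∩ U = A := inter_eq_left.2 (fun s _ => hUuniv s)
    rw [hAU]
    have hAle : volume A ≤ c := by
      have hcov : A = ⋃ n : ℕ, A ∩ Iio (n:ℝ) := by
        ext u
        simp only [mem_iUnion, mem_inter_iff, mem_Iio]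
        constructor
        · intro hu
          obtain ⟨n, hn⟩ := exists_nat_gt u
          exact ⟨n, hu, hn⟩
        · rintro ⟨n, hu, _⟩; exact hu
      have hmono2 : Monotone (fun n : ℕ => A ∩ Iio (n:ℝ)) := fun n m hnm =>
        inter_subset_inter_right _ (Iio_subset_Iio (Nat.cast_le.2 hnm))
      calc volume A = ⨆ n : ℕ, f (n:ℝ) := by rw [hcov, hmono2.measure_iUnion]
        _ ≤ c := iSup_le (fun n => (hUuniv (n:ℝ)).le)
    rw [min_eq_right hAle]
  · push_neg at hUuniv
    obtain ⟨s₁, hs₁⟩ := hUuniv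
    have hbdd : BddAbove U := by
      refine ⟨s₁, fun u hu => ?_⟩
      by_contra hc
      push_neg at hc
      exact hs₁ (hUlow s₁ u hc.le hu)
    have hUne : U.Nonempty := ⟨0, hU0 0 le_rfl⟩
    set sc := sSup U with hscdef
    have claim1 : Iio sc ⊆ U := by
      intro s hs
      obtain ⟨u, huU, hu⟩ := exists_lt_of_lt_csSup hUne hs
      exact hUlow s u hu.le huU
    have claim2 : U ⊆ Iic sc := fun u hu => le_csSup hbdd hu
    have hsing : ∀ z : ℝ, volume (A ∩ {z}) = 0 := fun z =>
      le_antisymm (le_trans (measure_mono inter_subset_right) (by simp)) zero_le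
    have hIic : volume (A ∩ Iic sc) = f sc := by
      refine le_antisymm ?_ (measure_mono (inter_subset_inter_right _ Iio_subset_Iic_self))
      have hsplit : A ∩ Iic sc ⊆ (A ∩ Iio sc) ∪ (A ∩ {sc}) := by
        rintro u ⟨huA, hu⟩
        rcases lt_or_eq_of_le (show u ≤ sc from hu) with h | h
        · exact Or.inl ⟨huA, h⟩
        · exact Or.inr ⟨huA, h⟩
      calc volume (A ∩ Iic sc) ≤ volume (A ∩ Iio sc) + volume (A ∩ {sc}) :=
            le_trans (measure_mono hsplit) (measure_union_le _ _)
        _ = f sc := by rw [hsing, add_zero]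
    have keyA : volume (A ∩ U) = f sc := by
      refine le_antisymm ?_ (measure_mono (inter_subset_inter_right _ claim1))
      calc volume (A ∩ U) ≤ volume (A ∩ Iic sc) :=
            measure_mono (inter_subset_inter_right _ claim2)
        _ = f sc := hIic
    have hfsc_le : f sc ≤ c := by
      have hcov : Iio sc = ⋃ n : ℕ, Iio (sc - ((n:ℝ)+1)⁻¹) := by
        ext u
        simp only [mem_Iio, mem_iUnion]
        constructor
        · intro hu
          obtain ⟨n, hn⟩ := exists_nat_one_div_lt (sub_pos.2 hu)
          rw [one_div] at hn
          exact ⟨n, by linarith⟩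
        · rintro ⟨n, hn⟩
          have : (0:ℝ) < ((n:ℝ)+1)⁻¹ := by positivity
          linarith
      have hmono2 : Monotone (fun n : ℕ => A ∩ Iio (sc - ((n:ℝ)+1)⁻¹)) := by
        intro n m hnm
        refine inter_subset_inter_right _ (Iio_subset_Iio ?_)
        have h1 : ((m:ℝ)+1)⁻¹ ≤ ((n:ℝ)+1)⁻¹ := by
          apply inv_anti₀ (by positivity)
          exact_mod_cast add_le_add_left (Nat.cast_le.2 hnm) 1
        linarith
      calc f sc = volume (⋃ n : ℕ, A ∩ Iio (sc - ((n:ℝ)+1)⁻¹)) := by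
            rw [hfdef]; rw [← inter_iUnion]; rw [← hcov]
        _ = ⨆ n : ℕ, f (sc - ((n:ℝ)+1)⁻¹) := hmono2.measure_iUnion
        _ ≤ c := iSup_le (fun n => (claim1 (by
            simp only [mem_Iio]
            have : (0:ℝ) < ((n:ℝ)+1)⁻¹ := by positivity
            linarith)).le)
    have hc_le : c ≤ f sc := by
      have hnotU : ∀ n : ℕ, c ≤ f (sc + ((n:ℝ)+1)⁻¹) := by
        intro n
        by_contra hcn
        push_neg at hcn
        have : sc + ((n:ℝ)+1)⁻¹ ≤ sc := le_csSup hbdd hcn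
        have h0 : (0:ℝ) < ((n:ℝ)+1)⁻¹ := by positivity
        linarith
      have hanti2 : Antitone (fun n : ℕ => A ∩ Iio (sc + ((n:ℝ)+1)⁻¹)) := by
        intro n m hnm
        refine inter_subset_inter_right _ (Iio_subset_Iio ?_)
        have h1 : ((m:ℝ)+1)⁻¹ ≤ ((n:ℝ)+1)⁻¹ := by
          apply inv_anti₀ (by positivity)
          exact_mod_cast add_le_add_left (Nat.cast_le.2 hnm) 1
        linarith
      have hiInter : (⋂ n : ℕ, A ∩ Iio (sc + ((n:ℝ)+1)⁻¹)) = A ∩ Iic sc := by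
        ext u
        simp only [mem_iInter, mem_inter_iff, mem_Iio, mem_Iic]
        constructor
        · intro h
          refine ⟨(h 0).1, ?_⟩
          by_contra hu
          push_neg at hu
          obtain ⟨n, hn⟩ := exists_nat_one_div_lt (sub_pos.2 hu)
          rw [one_div] at hn
          have := (h n).2
          linarith
        · rintro ⟨huA, hu⟩ n
          have : (0:ℝ) < ((n:ℝ)+1)⁻¹ := by positivity
          exact ⟨huA, by linarith⟩
      have := hanti2.measure_iInter
        (fun n => (hA.inter measurableSet_Iio).nullMeasurableSet)
        ⟨0, hffin _⟩
      rw [hiInter, hIic] at this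
      rw [this]
      exact le_iInf (fun n => hnotU n)
    have hfsc : f sc = c := le_antisymm hfsc_le hc_le
    have hfA : f sc ≤ volume A := measure_mono inter_subset_left
    rw [keyA, hfsc, min_eq_left (hfsc ▸ hfA)]

lemma cdf_ae_lt {A : Set ℝ} (hA : MeasurableSet A) (hA0 : A ⊆ Ici 0)
    (hfin : volume A ≠ ∞) :
    volume (A ∩ {s : ℝ | ¬ (volume (A ∩ Iio s) < volume A)}) = 0 := by
  have h1 := cdf_min hA hA0 (volume A)
  rw [min_self] at h1
  have hfmeas : Measurable (fun s : ℝ => volume (A ∩ Iio s)) := by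
    apply Monotone.measurable
    exact fun s t hst => measure_mono (inter_subset_inter_right _ (Iio_subset_Iio hst))
  have hUm : MeasurableSet {s : ℝ | volume (A ∩ Iio s) < volume A} :=
    hfmeas measurableSet_Iio
  have h2 := measure_inter_add_diff A hUm (μ := volume)
  rw [h1] at h2
  have hdiff : A \ {s : ℝ | volume (A ∩ Iio s) < volume A}
      = A ∩ {s : ℝ | ¬ (volume (A ∩ Iio s) < volume A)} := rfl
  rw [hdiff] at h2
  have h3 : volume A + volume (A ∩ {s : ℝ | ¬ (volume (A ∩ Iio s) < volume A)})
      = volume A + 0 := by rw [add_zero]; exact h2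
  exact (ENNReal.add_right_inj hfin).1 h3

end CDF

section Sigma

variable (α) in
/-- level set of `|X|` inside the base interval -/
def Aset (X : ℝ → ℝ) (a : ℝ) : Set ℝ := Iset α ∩ {s : ℝ | |X s| = a}

variable (α) in
/-- position within the level set -/
def Lloc (X : ℝ → ℝ) (s : ℝ) : ℝ≥0∞ := volume (Aset α X (|X s|) ∩ Iio s)

variable (α) in
/-- the measure-preserving rearrangement map (ℝ≥0∞-valued) -/
def sigE (X : ℝ → ℝ) (s : ℝ) : ℝ≥0∞ := distr α X (|X s|) + Lloc α X s

variable (α) in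
def sigR (X : ℝ → ℝ) (s : ℝ) : ℝ := (sigE α X s).toReal

variable {X : ℝ → ℝ}

lemma measurableSet_Aset (hX : Measurable X) (a : ℝ) : MeasurableSet (Aset α X a) :=
  (measurableSet_Iset α).inter (hX.abs (measurableSet_singleton a))

lemma muI_abs_eq (X : ℝ → ℝ) (a : ℝ) : muI α {s : ℝ | |X s| = a} = volume (Aset α X a) := by
  rw [muI_apply, Aset, inter_comm]

lemma measure_abs_ge (hX : Measurable X) (lam : ℝ) :
    muI α {s : ℝ | lam ≤ |X s|} = distr α X lam + volume (Aset α X lam) := by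
  have hsplit : {s : ℝ | lam ≤ |X s|} = {s : ℝ | lam < |X s|} ∪ {s : ℝ | |X s| = lam} := by
    ext s
    simp only [mem_setOf_eq, mem_union]
    constructor
    · intro h
      rcases lt_or_eq_of_le h with h | h
      · exact Or.inl h
      · exact Or.inr h.symm
    · rintro (h | h)
      · exact h.le
      · exact h.ge
  have hmeas : MeasurableSet {s : ℝ | |X s| = lam} := hX.abs (measurableSet_singleton lam)
  have hdisj : Disjoint {s : ℝ | lam < |X s|} {s : ℝ | |X s| = lam} := by
    rw [disjoint_left]
    intro s hs1 hs2
    simp only [mem_setOf_eq] at hs1 hs2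
    rw [hs2] at hs1
    exact lt_irrefl _ hs1
  rw [hsplit, measure_union hdisj hmeas, muI_abs_eq]
  rfl

lemma Aset_vol_ne_top (hdfin : ∀ lam : ℝ, 0 < lam → distr α X lam ≠ ∞)
    {a : ℝ} (ha : 0 < a) : volume (Aset α X a) ≠ ∞ := by
  refine ne_top_of_le_ne_top (hdfin (a/2) (half_pos ha)) ?_
  rw [← muI_abs_eq]
  refine measure_mono (fun s hs => ?_)
  simp only [mem_setOf_eq] at hs ⊢
  rw [hs]
  linarith
lemma Lloc_le (X : ℝ → ℝ) (s : ℝ) : Lloc α X s ≤ volume (Aset α X (|X s|)) :=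
  measure_mono inter_subset_left

lemma Lloc_ne_top (X : ℝ → ℝ) (s : ℝ) : Lloc α X s ≠ ∞ := by
  have hle : Lloc α X s ≤ volume (Ico (0:ℝ) (max s 0)) := by
    refine measure_mono (fun u hu => ?_)
    exact ⟨(hu.1.1 : u ∈ Iset α).1, lt_of_lt_of_le hu.2 (le_max_left s 0)⟩
  refine ne_top_of_le_ne_top ?_ hle
  rw [Real.volume_Ico]
  exact ENNReal.ofReal_ne_top

lemma measurable_Lloc (hX : Measurable X) : Measurable (Lloc α X) := by
  have hE : MeasurableSet {q : (ℝ × ℝ) × ℝ |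
      (q.2 ∈ Iset α ∧ |X q.2| = q.1.1) ∧ q.2 < q.1.2} := by
    refine (MeasurableSet.inter ?_ ?_).inter ?_
    · exact measurable_snd (measurableSet_Iset α)
    · exact measurableSet_eq_fun ((hX.comp measurable_snd).abs) (measurable_fst.fst)
    · exact measurableSet_lt measurable_snd measurable_fst.snd
  have h1 : Measurable (fun p : ℝ × ℝ => volume (Prod.mk p ⁻¹' {q : (ℝ × ℝ) × ℝ |
      (q.2 ∈ Iset α ∧ |X q.2| = q.1.1) ∧ q.2 < q.1.2})) :=
    measurable_measure_prodMk_left hE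
  have h2 : Measurable (fun s : ℝ => (|X s|, s)) := (hX.abs).prodMk measurable_id
  have heq : Lloc α X = (fun p : ℝ × ℝ => volume (Prod.mk p ⁻¹' {q : (ℝ × ℝ) × ℝ |
      (q.2 ∈ Iset α ∧ |X q.2| = q.1.1) ∧ q.2 < q.1.2})) ∘ (fun s : ℝ => (|X s|, s)) := by
    funext s
    show volume (Aset α X (|X s|) ∩ Iio s) = _
    simp only [Function.comp_apply]
    congr 1
  rw [heq]
  exact h1.comp h2

lemma measurable_sigE (hX : Measurable X) : Measurable (sigE α X) := by
  refine Measurable.add ?_ (measurable_Lloc hX)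
  exact (distr_anti.measurable).comp (hX.abs)

lemma measurable_sigR (hX : Measurable X) : Measurable (sigR α X) :=
  (measurable_sigE hX).ennreal_toReal

lemma sigE_ne_top_of_pos (hX : Measurable X)
    (hdfin : ∀ lam : ℝ, 0 < lam → distr α X lam ≠ ∞) {s : ℝ} (hs : 0 < |X s|) :
    sigE α X s ≠ ∞ :=
  ENNReal.add_ne_top.2 ⟨hdfin _ hs, Lloc_ne_top X s⟩

lemma loc_lt_ae (hX : Measurable X) :
    muI α {s : ℝ | volume (Aset α X (|X s|)) ≠ 0 ∧
      ¬ (Lloc α X s < volume (Aset α X (|X s|)))} = 0 := by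
  have hdisj : Pairwise (Function.onFun (AEDisjoint volume) (Aset α X)) := by
    intro a b hab
    refine Disjoint.aedisjoint ?_
    rw [disjoint_left]
    rintro s ⟨_, hs1⟩ ⟨_, hs2⟩
    simp only [mem_setOf_eq] at hs1 hs2
    exact hab (hs1.symm.trans hs2)
  have hcnt : Set.Countable {a : ℝ | 0 < volume (Aset α X a)} :=
    MeasureTheory.Measure.countable_meas_pos_of_disjoint_iUnion₀
      (fun a => (measurableSet_Aset hX a).nullMeasurableSet) hdisj
  have hsub : {s : ℝ | volume (Aset α X (|X s|)) ≠ 0 ∧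
      ¬ (Lloc α X s < volume (Aset α X (|X s|)))} ⊆
      ⋃ a ∈ {a : ℝ | 0 < volume (Aset α X a)},
        {s : ℝ | |X s| = a ∧ ¬ (volume (Aset α X a ∩ Iio s) < volume (Aset α X a))} := by
    rintro s ⟨h1, h2⟩
    refine mem_biUnion (pos_iff_ne_zero.2 h1) ?_
    exact ⟨rfl, by rwa [Lloc] at h2⟩
  refine measure_mono_null hsub ?_
  rw [measure_biUnion_null_iff hcnt]
  intro a ha
  by_cases hfin : volume (Aset α X a) = ∞
  · have hemp : {s : ℝ | |X s| = a ∧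
        ¬ (volume (Aset α X a ∩ Iio s) < volume (Aset α X a))} = ∅ := by
      ext s
      simp only [mem_setOf_eq, mem_empty_iff_false, iff_false, not_and, not_not]
      intro _
      rw [hfin]
      have hfin2 : volume (Aset α X a ∩ Iio s) ≠ ∞ := by
        have hle : volume (Aset α X a ∩ Iio s) ≤ volume (Ico (0:ℝ) (max s 0)) := by
          refine measure_mono (fun u hu => ?_)
          exact ⟨(hu.1.1 : u ∈ Iset α).1, lt_of_lt_of_le hu.2 (le_max_left s 0)⟩
        refine ne_top_of_le_ne_top ?_ hle
        rw [Real.volume_Ico]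
        exact ENNReal.ofReal_ne_top
      exact hfin2.lt_top
    rw [hemp]
    exact measure_empty
  · have hkey := cdf_ae_lt (measurableSet_Aset hX a)
      (fun u hu => (hu.1 : u ∈ Iset α).1) hfin
    rw [muI_apply]
    refine measure_mono_null ?_ hkey
    rintro s ⟨⟨hs1, hs2⟩, hsI⟩
    exact ⟨⟨hsI, hs1⟩, hs2⟩

lemma cond_level_null {e : ℝ} (hcond : Prop) [Decidable hcond]
    (h : hcond → volume (Aset α X e) = 0) :
    muI α {s : ℝ | |X s| = e ∧ hcond} = 0 := by
  by_cases hc : hcond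
  · have h2 : muI α {s : ℝ | |X s| = e} = 0 := by
      rw [muI_abs_eq]
      exact h hc
    exact measure_mono_null (fun s hs => hs.1) h2
  · have : {s : ℝ | |X s| = e ∧ hcond} = ∅ := by
      ext s; simp [hc]
    rw [this]
    exact measure_empty

lemma J_null (hX : Measurable X)
    (hdfin : ∀ lam : ℝ, 0 < lam → distr α X lam ≠ ∞)
    {β : ℝ} (hβ : 0 ≤ β) {c : ℝ≥0∞} (hc : c ≠ 0) :
    muI α {s : ℝ | β < |X s| ∧ volume (Aset α X (|X s|)) = 0 ∧
      distr α X (|X s|) = c} = 0 := by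
  set J := {a : ℝ | β < a ∧ volume (Aset α X a) = 0 ∧ distr α X a = c} with hJdef
  have htarget : {s : ℝ | β < |X s| ∧ volume (Aset α X (|X s|)) = 0 ∧
      distr α X (|X s|) = c} = {s : ℝ | |X s| ∈ J} := rfl
  rcases J.eq_empty_or_nonempty with hJe | hJne
  · rw [htarget, hJe]
    simp
  have hJbddB : BddBelow J := ⟨β, fun a ha => ha.1.le⟩
  have hJbddA : BddAbove J := by
    obtain ⟨K, hK0, hKlt⟩ := exists_distr_lt hX one_pos (hdfin 1 one_pos) hc
    refine ⟨K, fun a ha => ?_⟩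
    by_contra hcon
    push_neg at hcon
    have : distr α X a ≤ distr α X K := distr_anti hcon.le
    rw [ha.2.2] at this
    exact absurd (lt_of_le_of_lt this hKlt) (lt_irrefl c)
  set ji := sInf J with hjidef
  set js := sSup J with hjsdef
  have hji0 : 0 ≤ ji := le_csInf hJne (fun a ha => le_trans hβ ha.1.le)
  have hconst : ∀ p ∈ Ioo ji js, distr α X p = c := by
    rintro p ⟨hp1, hp2⟩
    obtain ⟨a, haJ, hap⟩ := exists_lt_of_csInf_lt hJne hp1
    obtain ⟨b, hbJ, hpb⟩ := exists_lt_of_lt_csSup hJne hp2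
    refine le_antisymm ?_ ?_
    · rw [← haJ.2.2]
      exact distr_anti hap.le
    · rw [← hbJ.2.2]
      exact distr_anti hpb.le
  have hmid : muI α {s : ℝ | ji < |X s| ∧ |X s| < js} = 0 := by
    have hcover : {s : ℝ | ji < |X s| ∧ |X s| < js} ⊆
        ⋃ pq : ℚ × ℚ, (if ji < (pq.1:ℝ) ∧ (pq.1:ℝ) ≤ (pq.2:ℝ) ∧ (pq.2:ℝ) < js
          then {s : ℝ | (pq.1:ℝ) < |X s| ∧ |X s| ≤ (pq.2:ℝ)} else ∅) := by
      rintro s ⟨h1, h2⟩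
      obtain ⟨p, hp1, hp2⟩ := exists_rat_btwn h1
      obtain ⟨q, hq1, hq2⟩ := exists_rat_btwn h2
      refine mem_iUnion.2 ⟨(p, q), ?_⟩
      rw [if_pos ⟨hp1, by push_cast; linarith, hq2⟩]
      exact ⟨hp2, hq1.le⟩
    refine measure_mono_null hcover (measure_iUnion_null (fun pq => ?_))
    by_cases hcond : ji < (pq.1:ℝ) ∧ (pq.1:ℝ) ≤ (pq.2:ℝ) ∧ (pq.2:ℝ) < js
    · rw [if_pos hcond]
      obtain ⟨hc1, hc2, hc3⟩ := hcond
      have hp0 : (0:ℝ) < (pq.1:ℝ) := lt_of_le_of_lt hji0 hc1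
      have hsplit : {s : ℝ | (pq.1:ℝ) < |X s| ∧ |X s| ≤ (pq.2:ℝ)}
          = {s : ℝ | (pq.1:ℝ) < |X s|} \ {s : ℝ | (pq.2:ℝ) < |X s|} := by
        ext s
        simp only [mem_setOf_eq, mem_diff, not_lt]
      have hss : {s : ℝ | (pq.2:ℝ) < |X s|} ⊆ {s : ℝ | (pq.1:ℝ) < |X s|} :=
        fun s hs => lt_of_le_of_lt hc2 hs
      have hnm : NullMeasurableSet {s : ℝ | (pq.2:ℝ) < |X s|} (muI α) :=
        (hX.abs measurableSet_Ioi : MeasurableSet {s : ℝ | (pq.2:ℝ) < |X s|}).nullMeasurableSet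
      have hdiff := measure_diff (μ := muI α) hss hnm
        (hdfin (pq.2:ℝ) (lt_of_lt_of_le hp0 hc2))
      rw [hsplit, hdiff]
      have hdp : distr α X (pq.1:ℝ) = c := by
        rcases eq_or_lt_of_le hc2 with heq | hlt
        · rcases eq_or_lt_of_le (le_of_lt hc1) with heq2 | hlt2
          · exact hconst _ ⟨hc1, lt_of_le_of_lt hc2 hc3⟩
          · exact hconst _ ⟨hc1, lt_of_le_of_lt hc2 hc3⟩
        · exact hconst _ ⟨hc1, lt_of_le_of_lt hc2 hc3⟩
      have hdq : distr α X (pq.2:ℝ) = c := hconst _ ⟨lt_of_lt_of_le hc1 hc2, hc3⟩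
      change distr α X (pq.1:ℝ) - distr α X (pq.2:ℝ) = 0
      rw [hdp, hdq, tsub_self]
    · rw [if_neg hcond]
      exact measure_empty
  have hend1 : muI α {s : ℝ | |X s| = ji ∧ ji ∈ J} = 0 := by
    classical
    exact cond_level_null (ji ∈ J) (fun h => h.2.1)
  have hend2 : muI α {s : ℝ | |X s| = js ∧ js ∈ J} = 0 := by
    classical
    exact cond_level_null (js ∈ J) (fun h => h.2.1)
  rw [htarget]
  have hsub : {s : ℝ | |X s| ∈ J} ⊆ {s : ℝ | ji < |X s| ∧ |X s| < js}
      ∪ ({s : ℝ | |X s| = ji ∧ ji ∈ J} ∪ {s : ℝ | |X s| = js ∧ js ∈ J}) := by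
    intro s hs
    have h1 : ji ≤ |X s| := csInf_le hJbddB hs
    have h2 : |X s| ≤ js := le_csSup hJbddA hs
    rcases eq_or_lt_of_le h1 with he1 | hl1
    · exact Or.inr (Or.inl ⟨he1.symm, he1 ▸ hs⟩)
    · rcases eq_or_lt_of_le h2 with he2 | hl2
      · exact Or.inr (Or.inr ⟨he2, he2 ▸ hs⟩)
      · exact Or.inl ⟨hl1, hl2⟩
  refine measure_mono_null hsub ?_
  refine measure_union_null hmid (measure_union_null hend1 hend2)

lemma distr_rearr_le (hsne : ∀ t : ℝ, 0 < t → (Sset α X t).Nonempty) {r : ℝ} (hr : 0 < r) :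
    distr α X (rearr α X r) ≤ ENNReal.ofReal r := by
  rw [distr_right_continuous]
  refine iSup_le (fun n => ?_)
  have h0 : (0:ℝ) < ((n:ℝ)+1)⁻¹ := by positivity
  refine distr_le_of_lt ?_ (hsne r hr) ?_
  · have := rearr_nonneg (α := α) X r
    linarith
  · linarith

lemma le_measure_ge_rearr (hX : Measurable X)
    (hdfin : ∀ lam : ℝ, 0 < lam → distr α X lam ≠ ∞)
    {r : ℝ} (hr : 0 < r) (hlr : 0 < rearr α X r) :
    ENNReal.ofReal r ≤ muI α {s : ℝ | rearr α X r ≤ |X s|} := by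
  set lr := rearr α X r with hlrdef
  have hlam : ∀ n : ℕ, 0 < lr - lr / ((n:ℝ)+2) := by
    intro n
    have h1 : lr / ((n:ℝ)+2) < lr := by
      rw [div_lt_iff₀ (by positivity)]
      nlinarith
    linarith
  have hanti : Antitone (fun n : ℕ => {s : ℝ | lr - lr / ((n:ℝ)+2) < |X s|}) := by
    intro n m hnm s hs
    simp only [mem_setOf_eq] at hs ⊢
    have h1 : lr / ((m:ℝ)+2) ≤ lr / ((n:ℝ)+2) := by
      apply div_le_div_of_nonneg_left hlr.le (by positivity)
      exact_mod_cast add_le_add_left (Nat.cast_le.2 hnm) 2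
    linarith
  have hiInter : (⋂ n : ℕ, {s : ℝ | lr - lr / ((n:ℝ)+2) < |X s|}) = {s : ℝ | lr ≤ |X s|} := by
    ext s
    simp only [mem_iInter, mem_setOf_eq]
    constructor
    · intro h
      by_contra hcon
      push_neg at hcon
      set δ := lr - |X s| with hδdef
      have hδ : 0 < δ := by simp only [hδdef]; linarith
      obtain ⟨n, hn⟩ := exists_nat_gt (lr / δ)
      have h2 : lr / ((n:ℝ)+2) < δ := by
        rw [div_lt_iff₀ (by positivity)]
        have h3 : lr < δ * n := by
          rw [← div_lt_iff₀' hδ]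
          exact hn
        nlinarith
      have := h n
      simp only [hδdef] at h2
      linarith
    · intro h n
      have := hlam n
      have h1 : lr / ((n:ℝ)+2) > 0 := by positivity
      linarith
  have hmeas : ∀ n : ℕ, NullMeasurableSet {s : ℝ | lr - lr / ((n:ℝ)+2) < |X s|} (muI α) :=
    fun n => (hX.abs measurableSet_Ioi :
      MeasurableSet {s : ℝ | lr - lr / ((n:ℝ)+2) < |X s|}).nullMeasurableSet
  have hfin : ∃ n : ℕ, muI α {s : ℝ | lr - lr / ((n:ℝ)+2) < |X s|} ≠ ∞ :=
    ⟨0, hdfin _ (hlam 0)⟩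
  have hkey := hanti.measure_iInter hmeas hfin
  rw [hiInter] at hkey
  rw [hkey]
  refine le_iInf (fun n => ?_)
  have hnot : (lr - lr / ((n:ℝ)+2)) ∉ Sset α X r := by
    have hlt : lr - lr / ((n:ℝ)+2) < sInf (Sset α X r) := by
      rw [← rearr_eq, ← hlrdef]
      have h1 : lr / ((n:ℝ)+2) > 0 := by positivity
      linarith
    exact notMem_of_lt_csInf hlt Sset_bddBelow
  simp only [Sset, mem_setOf_eq, not_and, not_le] at hnot
  exact (hnot (hlam n)).le

lemma sigE_lt_measure (hX : Measurable X)
    (hdfin : ∀ lam : ℝ, 0 < lam → distr α X lam ≠ ∞)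
    (hsne : ∀ t : ℝ, 0 < t → (Sset α X t).Nonempty)
    {r : ℝ} (hr : 0 < r) :
    muI α {s : ℝ | sigE α X s < ENNReal.ofReal r}
      = min (ENNReal.ofReal r) (muI α univ) := by
  set R := ENNReal.ofReal r with hRdef
  have hR0 : R ≠ 0 := by
    simp only [hRdef, ne_eq, ENNReal.ofReal_eq_zero, not_le]
    exact hr
  have hRtop : R ≠ ∞ := ENNReal.ofReal_ne_top
  set W := {s : ℝ | sigE α X s < R} with hWdef
  have hWm : MeasurableSet W := (measurable_sigE hX) measurableSet_Iio
  have habs_univ : {u : ℝ | (0:ℝ) ≤ |X u|} = univ := by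
    ext u; simp [abs_nonneg]
  have hsig_le_ge : ∀ s, sigE α X s ≤ muI α {u : ℝ | |X s| ≤ |X u|} := by
    intro s
    rw [measure_abs_ge hX]
    exact add_le_add_right (Lloc_le X s) _
  have hMle : ∀ s, sigE α X s ≤ muI α univ := fun s =>
    (hsig_le_ge s).trans (measure_mono (subset_univ _))
  rcases le_or_gt (muI α univ) R with hRM | hRM
  · rw [min_eq_right hRM]
    rcases lt_or_eq_of_le hRM with hlt | heq
    · have hWu : W = univ := eq_univ_of_forall (fun s => lt_of_le_of_lt (hMle s) hlt)
      rw [hWu]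
    · have hMne : muI α univ ≠ ∞ := by rw [heq]; exact hRtop
      have hM0 : muI α univ ≠ 0 := by rw [heq]; exact hR0
      have hae1 := loc_lt_ae (α := α) hX
      have haeJ := J_null hX hdfin (le_refl (0:ℝ)) hM0
      have haeZ : muI α {s : ℝ | |X s| = 0 ∧ volume (Aset α X 0) = 0} = 0 := by
        classical
        exact cond_level_null _ id
      have hcompl : muI α Wᶜ = 0 := by
        refine measure_mono_null ?_
          (measure_union_null hae1 (measure_union_null haeJ haeZ))
        intro s hs
        simp only [hWdef, mem_compl_iff, mem_setOf_eq, not_lt] at hs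
        by_contra hcon
        simp only [mem_union, mem_setOf_eq, not_or, not_and, not_not] at hcon
        obtain ⟨hc1, hc2, hc3⟩ := hcon
        rcases eq_or_lt_of_le (abs_nonneg (X s)) with h0 | h0
        · -- |X s| = 0
          have hA0 : ¬ volume (Aset α X 0) = 0 := hc3 h0.symm
          have hAs : volume (Aset α X (|X s|)) ≠ 0 := by rw [← h0]; exact hA0
          have hL : Lloc α X s < volume (Aset α X (|X s|)) := hc1 hAs
          have hdne : distr α X (|X s|) ≠ ∞ :=
            ne_top_of_le_ne_top hMne distr_le_univ
          have hlt2 : sigE α X s < muI α univ := by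
            calc sigE α X s < distr α X (|X s|) + volume (Aset α X (|X s|)) :=
                  ENNReal.add_lt_add_left hdne hL
              _ = muI α {u : ℝ | |X s| ≤ |X u|} := (measure_abs_ge hX _).symm
              _ ≤ muI α univ := measure_mono (subset_univ _)
          rw [heq] at hlt2
          exact absurd hs (not_le.2 hlt2)
        · -- 0 < |X s|
          by_cases hA : volume (Aset α X (|X s|)) = 0
          · have hdne : ¬ distr α X (|X s|) = muI α univ := hc2 h0 hA
            have hL0 : Lloc α X s = 0 :=
              le_antisymm (le_trans (Lloc_le X s) (le_of_eq hA)) zero_le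
            have hsig : sigE α X s = distr α X (|X s|) := by
              show distr α X (|X s|) + Lloc α X s = _
              rw [hL0, add_zero]
            have hle2 : distr α X (|X s|) ≤ muI α univ := distr_le_univ
            have hge2 : muI α univ ≤ distr α X (|X s|) := by
              rw [heq, ← hsig]
              exact hs
            exact hdne (le_antisymm hle2 hge2)
          · have hL : Lloc α X s < volume (Aset α X (|X s|)) := hc1 hA
            have hdne : distr α X (|X s|) ≠ ∞ := hdfin _ h0
            have hlt2 : sigE α X s < muI α univ := by
              calc sigE α X s < distr α X (|X s|) + volume (Aset α X (|X s|)) :=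
                    ENNReal.add_lt_add_left hdne hL
                _ = muI α {u : ℝ | |X s| ≤ |X u|} := (measure_abs_ge hX _).symm
                _ ≤ muI α univ := measure_mono (subset_univ _)
            rw [heq] at hlt2
            exact absurd hs (not_le.2 hlt2)
      have := measure_add_measure_compl (μ := muI α) hWm
      rw [hcompl, add_zero] at this
      exact this
  · rw [min_eq_left hRM.le]
    set lr := rearr α X r with hlrdef
    have hlr0 : 0 ≤ lr := rearr_nonneg X r
    have hdlr_le : distr α X lr ≤ R := distr_rearr_le hsne hr
    by_cases hlrpos : 0 < lr
    · have hgeR : R ≤ muI α {s : ℝ | lr ≤ |X s|} :=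
        le_measure_ge_rearr hX hdfin hr hlrpos
      set T1 := {s : ℝ | lr < |X s|} with hT1def
      set T2 := {s : ℝ | |X s| = lr} with hT2def
      have hkey1 : muI α (T1 \ W) = 0 := by
        refine measure_mono_null ?_
          (measure_union_null (loc_lt_ae (α := α) hX) (J_null hX hdfin hlr0 hR0))
        rintro s ⟨hsT1, hsW⟩
        simp only [hWdef, mem_setOf_eq, not_lt] at hsW
        simp only [hT1def, mem_setOf_eq] at hsT1
        have h0 : 0 < |X s| := lt_of_le_of_lt hlr0 hsT1
        have hdlam : distr α X (|X s|) ≤ R :=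
          distr_le_of_lt h0 (hsne r hr) hsT1
        by_cases hA : volume (Aset α X (|X s|)) = 0
        · right
          have hL0 : Lloc α X s = 0 :=
            le_antisymm (le_trans (Lloc_le X s) (le_of_eq hA)) zero_le
          have hsig : sigE α X s = distr α X (|X s|) := by
            show distr α X (|X s|) + Lloc α X s = _
            rw [hL0, add_zero]
          exact ⟨hsT1, hA, le_antisymm hdlam (hsig ▸ hsW)⟩
        · left
          refine ⟨hA, ?_⟩
          intro hL
          obtain ⟨mid, hmid1, hmid2⟩ := exists_between hsT1
          have hmid0 : 0 < mid := lt_of_le_of_lt hlr0 hmid1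
          have hstep : muI α {u : ℝ | |X s| ≤ |X u|} ≤ distr α X mid :=
            measure_mono (fun u hu => lt_of_lt_of_le hmid2 hu)
          have hmidR : distr α X mid ≤ R := distr_le_of_lt hmid0 (hsne r hr) hmid1
          have : sigE α X s < R := by
            calc sigE α X s < distr α X (|X s|) + volume (Aset α X (|X s|)) :=
                  ENNReal.add_lt_add_left (hdfin _ h0) hL
              _ = muI α {u : ℝ | |X s| ≤ |X u|} := (measure_abs_ge hX _).symm
              _ ≤ distr α X mid := hstep
              _ ≤ R := hmidR
          exact absurd hsW (not_le.2 this)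
      have h1eq : muI α (T1 ∩ W) = distr α X lr := by
        have := measure_inter_add_diff (μ := muI α) T1 hWm
        rw [hkey1, add_zero] at this
        exact this
      have h2eq : muI α (T2 ∩ W) = R - distr α X lr := by
        have hseteq : (T2 ∩ W) ∩ Iset α = Aset α X lr ∩
            {u : ℝ | volume (Aset α X lr ∩ Iio u) < R - distr α X lr} := by
          ext u
          constructor
          · rintro ⟨⟨hu1, hu2⟩, hu3⟩
            have hu1' : |X u| = lr := hu1
            have hu2' : sigE α X u < R := hu2
            refine ⟨⟨hu3, hu1'⟩, ?_⟩
            show volume (Aset α X lr ∩ Iio u) < R - distr α X lr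
            rw [lt_tsub_iff_left]
            have hsig : sigE α X u = distr α X lr + volume (Aset α X lr ∩ Iio u) := by
              show distr α X (|X u|) + volume (Aset α X (|X u|) ∩ Iio u) = _
              rw [hu1']
            rw [← hsig]
            exact hu2'
          · rintro ⟨⟨hu3, hu1⟩, hu2⟩
            have hu2' : volume (Aset α X lr ∩ Iio u) < R - distr α X lr := hu2
            rw [lt_tsub_iff_left] at hu2'
            refine ⟨⟨hu1, ?_⟩, hu3⟩
            show sigE α X u < R
            have hsig : sigE α X u = distr α X lr + volume (Aset α X lr ∩ Iio u) := by
              show distr α X (|X u|) + volume (Aset α X (|X u|) ∩ Iio u) = _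
              rw [hu1]
            rw [hsig]
            exact hu2'
        rw [muI_apply, hseteq, cdf_min (measurableSet_Aset hX lr)
          (fun u hu => (hu.1 : u ∈ Iset α).1)]
        refine min_eq_left ?_
        rw [tsub_le_iff_left]
        rw [← measure_abs_ge hX]
        exact hgeR
      have hsplit : W = (T1 ∩ W) ∪ (T2 ∩ W) := by
        ext s
        simp only [hT1def, hT2def, mem_union, mem_inter_iff, mem_setOf_eq]
        constructor
        · intro hs
          have hge : ¬ (|X s| < lr) := by
            intro hlt
            have h1 : muI α {u : ℝ | lr ≤ |X u|} ≤ distr α X (|X s|) :=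
              measure_mono (fun u hu => lt_of_lt_of_le hlt hu)
            have h2 : R ≤ sigE α X s :=
              le_trans (le_trans hgeR h1) le_self_add
            simp only [hWdef, mem_setOf_eq] at hs
            exact absurd hs (not_lt.2 h2)
          rcases lt_or_eq_of_le (not_lt.1 hge) with h | h
          · exact Or.inl ⟨h, hs⟩
          · exact Or.inr ⟨h.symm, hs⟩
        · rintro (⟨_, hs⟩ | ⟨_, hs⟩) <;> exact hs
      have hdisj : Disjoint (T1 ∩ W) (T2 ∩ W) := by
        rw [disjoint_left]
        rintro s ⟨hs1, _⟩ ⟨hs2, _⟩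
        simp only [hT1def, mem_setOf_eq] at hs1
        simp only [hT2def, mem_setOf_eq] at hs2
        rw [hs2] at hs1
        exact lt_irrefl _ hs1
      have hT2m : MeasurableSet (T2 ∩ W) :=
        (hX.abs (measurableSet_singleton lr)).inter hWm
      calc muI α W = muI α ((T1 ∩ W) ∪ (T2 ∩ W)) := by rw [← hsplit]
        _ = muI α (T1 ∩ W) + muI α (T2 ∩ W) := measure_union hdisj hT2m
        _ = R := by rw [h1eq, h2eq, add_tsub_cancel_of_le hdlr_le]
    · have hlreq : lr = 0 := le_antisymm (not_lt.1 hlrpos) hlr0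
      have hmR : distr α X 0 ≤ R := by
        by_contra hcon
        push_neg at hcon
        exact hlrpos (rearr_pos (hsne r hr) hcon)
      set T1 := {s : ℝ | 0 < |X s|} with hT1def
      set T2 := {s : ℝ | |X s| = 0} with hT2def
      have hd0 : muI α {u : ℝ | 0 < |X u|} = distr α X 0 := rfl
      have hkey1 : muI α (T1 \ W) = 0 := by
        refine measure_mono_null ?_
          (measure_union_null (loc_lt_ae (α := α) hX) (J_null hX hdfin (le_refl (0:ℝ)) hR0))
        rintro s ⟨hsT1, hsW⟩
        simp only [hWdef, mem_setOf_eq, not_lt] at hsW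
        simp only [hT1def, mem_setOf_eq] at hsT1
        have hdlam : distr α X (|X s|) ≤ R :=
          le_trans (distr_anti (abs_nonneg (X s))) hmR
        by_cases hA : volume (Aset α X (|X s|)) = 0
        · right
          have hL0 : Lloc α X s = 0 :=
            le_antisymm (le_trans (Lloc_le X s) (le_of_eq hA)) zero_le
          have hsig : sigE α X s = distr α X (|X s|) := by
            show distr α X (|X s|) + Lloc α X s = _
            rw [hL0, add_zero]
          exact ⟨hsT1, hA, le_antisymm hdlam (hsig ▸ hsW)⟩
        · left
          refine ⟨hA, ?_⟩
          intro hL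
          have hstep : muI α {u : ℝ | |X s| ≤ |X u|} ≤ distr α X 0 :=
            measure_mono (fun u hu => lt_of_lt_of_le hsT1 hu)
          have : sigE α X s < R := by
            calc sigE α X s < distr α X (|X s|) + volume (Aset α X (|X s|)) :=
                  ENNReal.add_lt_add_left (hdfin _ hsT1) hL
              _ = muI α {u : ℝ | |X s| ≤ |X u|} := (measure_abs_ge hX _).symm
              _ ≤ distr α X 0 := hstep
              _ ≤ R := hmR
          exact absurd hsW (not_le.2 this)
      have h1eq : muI α (T1 ∩ W) = distr α X 0 := by
        have := measure_inter_add_diff (μ := muI α) T1 hWm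
        rw [hkey1, add_zero] at this
        exact this
      have h2eq : muI α (T2 ∩ W) = R - distr α X 0 := by
        have hseteq : (T2 ∩ W) ∩ Iset α = Aset α X 0 ∩
            {u : ℝ | volume (Aset α X 0 ∩ Iio u) < R - distr α X 0} := by
          ext u
          constructor
          · rintro ⟨⟨hu1, hu2⟩, hu3⟩
            have hu1' : |X u| = 0 := hu1
            have hu2' : sigE α X u < R := hu2
            refine ⟨⟨hu3, hu1'⟩, ?_⟩
            show volume (Aset α X 0 ∩ Iio u) < R - distr α X 0
            rw [lt_tsub_iff_left]
            have hsig : sigE α X u = distr α X 0 + volume (Aset α X 0 ∩ Iio u) := by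
              show distr α X (|X u|) + volume (Aset α X (|X u|) ∩ Iio u) = _
              rw [hu1']
            rw [← hsig]
            exact hu2'
          · rintro ⟨⟨hu3, hu1⟩, hu2⟩
            have hu2' : volume (Aset α X 0 ∩ Iio u) < R - distr α X 0 := hu2
            rw [lt_tsub_iff_left] at hu2'
            refine ⟨⟨hu1, ?_⟩, hu3⟩
            show sigE α X u < R
            have hsig : sigE α X u = distr α X 0 + volume (Aset α X 0 ∩ Iio u) := by
              show distr α X (|X u|) + volume (Aset α X (|X u|) ∩ Iio u) = _
              rw [hu1]
            rw [hsig]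
            exact hu2'
        rw [muI_apply, hseteq, cdf_min (measurableSet_Aset hX 0)
          (fun u hu => (hu.1 : u ∈ Iset α).1)]
        refine min_eq_left ?_
        rw [tsub_le_iff_left]
        have : distr α X 0 + volume (Aset α X 0) = muI α univ := by
          rw [← measure_abs_ge hX, habs_univ]
        rw [this]
        exact hRM.le
      have hsplit : W = (T1 ∩ W) ∪ (T2 ∩ W) := by
        ext s
        simp only [hT1def, hT2def, mem_union, mem_inter_iff, mem_setOf_eq]
        constructor
        · intro hs
          rcases lt_or_eq_of_le (abs_nonneg (X s)) with h | h
          · exact Or.inl ⟨h, hs⟩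
          · exact Or.inr ⟨h.symm, hs⟩
        · rintro (⟨_, hs⟩ | ⟨_, hs⟩) <;> exact hs
      have hdisj : Disjoint (T1 ∩ W) (T2 ∩ W) := by
        rw [disjoint_left]
        rintro s ⟨hs1, _⟩ ⟨hs2, _⟩
        simp only [hT1def, mem_setOf_eq] at hs1
        simp only [hT2def, mem_setOf_eq] at hs2
        rw [hs2] at hs1
        exact lt_irrefl _ hs1
      have hT2m : MeasurableSet (T2 ∩ W) :=
        (hX.abs (measurableSet_singleton 0)).inter hWm
      calc muI α W = muI α ((T1 ∩ W) ∪ (T2 ∩ W)) := by rw [← hsplit]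
        _ = muI α (T1 ∩ W) + muI α (T2 ∩ W) := measure_union hdisj hT2m
        _ = R := by rw [h1eq, h2eq, add_tsub_cancel_of_le hmR]

lemma muI_Iio (hα : α = 1 ∨ α = ∞) (r : ℝ) :
    muI α (Iio r) = min (ENNReal.ofReal r) (muI α univ) := by
  rcases hα with hα | hα
  · subst hα
    have hIset : Iset 1 = Ico (0:ℝ) 1 := by
      ext s
      simp only [Iset, mem_setOf_eq, mem_Ico]
      constructor
      · rintro ⟨h1, h2⟩
        exact ⟨h1, by rwa [ENNReal.ofReal_lt_one] at h2⟩
      · rintro ⟨h1, h2⟩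
        exact ⟨h1, by rwa [ENNReal.ofReal_lt_one]⟩
    have hset : Iio r ∩ Iset 1 = Ico 0 (min r 1) := by
      rw [hIset]
      ext s
      simp only [mem_inter_iff, mem_Iio, mem_Ico, lt_min_iff]
      tauto
    rw [muI_apply, hset, Real.volume_Ico, sub_zero, muI_univ]
    have hmin : ENNReal.ofReal (min r 1) = min (ENNReal.ofReal r) (ENNReal.ofReal 1) :=
      Monotone.map_min (fun _ _ h => ENNReal.ofReal_le_ofReal h)
    rw [hmin, ENNReal.ofReal_one]
  · subst hα
    have hIset : Iset ∞ = Ici (0:ℝ) := by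
      ext s
      simp [Iset]
    have hset : Iio r ∩ Iset ∞ = Ico 0 r := by
      rw [hIset]
      ext s
      simp only [mem_inter_iff, mem_Iio, mem_Ici, mem_Ico]
      tauto
    rw [muI_apply, hset, Real.volume_Ico, sub_zero, muI_univ]
    exact (min_eq_left le_top).symm

lemma muI_Iic (hα : α = 1 ∨ α = ∞) (r : ℝ) :
    muI α (Iic r) = min (ENNReal.ofReal r) (muI α univ) := by
  refine le_antisymm ?_ ?_
  · have hsub : Iic r ⊆ Iio r ∪ {r} := by
      intro s hs
      rcases lt_or_eq_of_le (mem_Iic.1 hs) with h | h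
      · exact Or.inl h
      · exact Or.inr h
    calc muI α (Iic r) ≤ muI α (Iio r) + muI α {r} :=
          le_trans (measure_mono hsub) (measure_union_le _ _)
      _ = min (ENNReal.ofReal r) (muI α univ) := by
          rw [muI_singleton_zero, add_zero, muI_Iio hα]
  · rw [← muI_Iio hα]
    exact measure_mono Iio_subset_Iic_self

lemma iInf_ofReal_seq {a : ℝ} (ha : 0 ≤ a) :
    (⨅ n : ℕ, ENNReal.ofReal (a + ((n:ℝ)+1)⁻¹)) = ENNReal.ofReal a := by
  have hseq : Tendsto (fun n : ℕ => (1:ℝ) / ((n:ℝ) + 1)) atTop (𝓝 0) :=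
    tendsto_one_div_add_atTop_nhds_zero_nat
  have h2 : Tendsto (fun n : ℕ => a + ((n:ℝ)+1)⁻¹) atTop (𝓝 (a + 0)) := by
    refine tendsto_const_nhds.add ?_
    simpa [one_div] using hseq
  rw [add_zero] at h2
  have htend : Tendsto (fun n : ℕ => ENNReal.ofReal (a + ((n:ℝ)+1)⁻¹)) atTop
      (𝓝 (ENNReal.ofReal a)) := (ENNReal.continuous_ofReal.tendsto _).comp h2
  have hanti : Antitone (fun n : ℕ => ENNReal.ofReal (a + ((n:ℝ)+1)⁻¹)) := by
    intro n m hnm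
    apply ENNReal.ofReal_le_ofReal
    have h1 : ((m:ℝ)+1)⁻¹ ≤ ((n:ℝ)+1)⁻¹ := by
      apply inv_anti₀ (by positivity)
      exact_mod_cast add_le_add_left (Nat.cast_le.2 hnm) 1
    linarith
  exact tendsto_nhds_unique (tendsto_atTop_iInf hanti) htend

lemma sigE_le_measure (hX : Measurable X)
    (hdfin : ∀ lam : ℝ, 0 < lam → distr α X lam ≠ ∞)
    (hsne : ∀ t : ℝ, 0 < t → (Sset α X t).Nonempty)
    {a : ℝ} (ha : 0 ≤ a) :
    muI α {s : ℝ | sigE α X s ≤ ENNReal.ofReal a}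
      = min (ENNReal.ofReal a) (muI α univ) := by
  have hiInter : (⋂ n : ℕ, {s : ℝ | sigE α X s < ENNReal.ofReal (a + ((n:ℝ)+1)⁻¹)})
      = {s : ℝ | sigE α X s ≤ ENNReal.ofReal a} := by
    ext s
    simp only [mem_iInter, mem_setOf_eq]
    constructor
    · intro h
      have h2 : sigE α X s ≤ ⨅ n : ℕ, ENNReal.ofReal (a + ((n:ℝ)+1)⁻¹) :=
        le_iInf (fun n => (h n).le)
      rwa [iInf_ofReal_seq ha] at h2
    · intro h n
      refine lt_of_le_of_lt h ?_
      have h0 : (0:ℝ) < ((n:ℝ)+1)⁻¹ := by positivity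
      rw [ENNReal.ofReal_lt_ofReal_iff (by positivity)]
      linarith
  have hanti : Antitone (fun n : ℕ => {s : ℝ | sigE α X s < ENNReal.ofReal (a + ((n:ℝ)+1)⁻¹)}) := by
    intro n m hnm s hs
    simp only [mem_setOf_eq] at hs ⊢
    refine lt_of_lt_of_le hs (ENNReal.ofReal_le_ofReal ?_)
    have h1 : ((m:ℝ)+1)⁻¹ ≤ ((n:ℝ)+1)⁻¹ := by
      apply inv_anti₀ (by positivity)
      exact_mod_cast add_le_add_left (Nat.cast_le.2 hnm) 1
    linarith
  have hmeas : ∀ n : ℕ, NullMeasurableSet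
      {s : ℝ | sigE α X s < ENNReal.ofReal (a + ((n:ℝ)+1)⁻¹)} (muI α) :=
    fun n => ((measurable_sigE hX) measurableSet_Iio).nullMeasurableSet
  have hfin : ∃ n : ℕ, muI α {s : ℝ | sigE α X s < ENNReal.ofReal (a + ((n:ℝ)+1)⁻¹)} ≠ ∞ := by
    refine ⟨0, ?_⟩
    rw [sigE_lt_measure hX hdfin hsne (by positivity)]
    exact ne_top_of_le_ne_top ENNReal.ofReal_ne_top (min_le_left _ _)
  have hkey := hanti.measure_iInter hmeas hfin
  rw [hiInter] at hkey
  rw [hkey]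
  have heach : ∀ n : ℕ, muI α {s : ℝ | sigE α X s < ENNReal.ofReal (a + ((n:ℝ)+1)⁻¹)}
      = min (ENNReal.ofReal (a + ((n:ℝ)+1)⁻¹)) (muI α univ) :=
    fun n => sigE_lt_measure hX hdfin hsne (by positivity)
  calc (⨅ n : ℕ, muI α {s : ℝ | sigE α X s < ENNReal.ofReal (a + ((n:ℝ)+1)⁻¹)})
      = ⨅ n : ℕ, (ENNReal.ofReal (a + ((n:ℝ)+1)⁻¹)) ⊓ (muI α univ) := by
        refine iInf_congr (fun n => ?_)
        rw [heach n]
    _ = (⨅ n : ℕ, ENNReal.ofReal (a + ((n:ℝ)+1)⁻¹)) ⊓ (muI α univ) := iInf_inf.symm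
    _ = min (ENNReal.ofReal a) (muI α univ) := by
        rw [iInf_ofReal_seq ha]

lemma map_sigE (hα : α = 1 ∨ α = ∞) (hX : Measurable X)
    (hdfin : ∀ lam : ℝ, 0 < lam → distr α X lam ≠ ∞)
    (hsne : ∀ t : ℝ, 0 < t → (Sset α X t).Nonempty) :
    Measure.map (sigR α X) ((muI α).restrict {s : ℝ | sigE α X s ≠ ∞}) = muI α := by
  haveI : IsLocallyFiniteMeasure (muI α) := by
    constructor
    intro x
    refine ⟨Ioo (x-1) (x+1), Ioo_mem_nhds (by linarith) (by linarith), ?_⟩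
    refine lt_of_le_of_lt (muI_le_volume _) ?_
    rw [Real.volume_Ioo]
    exact ENNReal.ofReal_lt_top
  refine (Real.measure_ext_Ioo_rat (fun p q => ?_)).symm
  have hrhs : (Measure.map (sigR α X) ((muI α).restrict {s : ℝ | sigE α X s ≠ ∞}))
      (Ioo (p:ℝ) (q:ℝ))
      = muI α ((sigR α X ⁻¹' (Ioo (p:ℝ) (q:ℝ))) ∩ {s : ℝ | sigE α X s ≠ ∞}) := by
    rw [Measure.map_apply (measurable_sigR hX) measurableSet_Ioo,
      Measure.restrict_apply ((measurable_sigR hX) measurableSet_Ioo)]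
  rw [hrhs]
  by_cases hpq : (p:ℝ) < (q:ℝ)
  · by_cases hq0 : (q:ℝ) ≤ 0
    · have h1 : muI α (Ioo (p:ℝ) (q:ℝ)) = 0 := by
        rw [muI_apply]
        have : Ioo (p:ℝ) (q:ℝ) ∩ Iset α = ∅ := by
          ext s
          simp only [mem_inter_iff, mem_Ioo, mem_empty_iff_false, iff_false, not_and]
          rintro ⟨h2, h3⟩ h4
          exact absurd h4.1 (not_le.2 (lt_of_lt_of_le h3 hq0))
        rw [this, measure_empty]
      have h2 : (sigR α X ⁻¹' (Ioo (p:ℝ) (q:ℝ))) ∩ {s : ℝ | sigE α X s ≠ ∞} = ∅ := by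
        ext s
        simp only [mem_inter_iff, mem_preimage, mem_Ioo, mem_setOf_eq,
          mem_empty_iff_false, iff_false, not_and]
        rintro ⟨h3, h4⟩ _
        exact absurd (lt_of_lt_of_le h4 hq0) (not_lt.2 ENNReal.toReal_nonneg)
      rw [h1, h2, measure_empty]
    · push_neg at hq0
      by_cases hp0 : (p:ℝ) < 0
      · have hseteq : (sigR α X ⁻¹' (Ioo (p:ℝ) (q:ℝ))) ∩ {s : ℝ | sigE α X s ≠ ∞}
            = {s : ℝ | sigE α X s < ENNReal.ofReal q} := by
          ext s
          simp only [mem_inter_iff, mem_preimage, mem_Ioo, mem_setOf_eq]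
          constructor
          · rintro ⟨⟨_, h2⟩, h3⟩
            exact (ENNReal.lt_ofReal_iff_toReal_lt h3).2 h2
          · intro h
            have h3 : sigE α X s ≠ ∞ := h.ne_top
            refine ⟨⟨lt_of_lt_of_le hp0 ENNReal.toReal_nonneg,
              (ENNReal.lt_ofReal_iff_toReal_lt h3).1 h⟩, h3⟩
        have hlhs : muI α (Ioo (p:ℝ) (q:ℝ)) = muI α (Iio (q:ℝ)) := by
          rw [muI_apply, muI_apply]
          congr 1
          ext s
          simp only [mem_inter_iff, mem_Ioo, mem_Iio, Iset, mem_setOf_eq]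
          constructor
          · rintro ⟨⟨_, h2⟩, h3⟩
            exact ⟨h2, h3⟩
          · rintro ⟨h2, h3⟩
            exact ⟨⟨lt_of_lt_of_le hp0 h3.1, h2⟩, h3⟩
        rw [hseteq, hlhs, muI_Iio hα, sigE_lt_measure hX hdfin hsne hq0]
      · push_neg at hp0
        have hofpq : ENNReal.ofReal p < ENNReal.ofReal q :=
          (ENNReal.ofReal_lt_ofReal_iff hq0).2 hpq
        have hseteq : (sigR α X ⁻¹' (Ioo (p:ℝ) (q:ℝ))) ∩ {s : ℝ | sigE α X s ≠ ∞}
            = {s : ℝ | sigE α X s < ENNReal.ofReal q}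
              \ {s : ℝ | sigE α X s ≤ ENNReal.ofReal p} := by
          ext s
          simp only [mem_inter_iff, mem_preimage, mem_Ioo, mem_setOf_eq, mem_diff, not_le]
          constructor
          · rintro ⟨⟨h1, h2⟩, h3⟩
            exact ⟨(ENNReal.lt_ofReal_iff_toReal_lt h3).2 h2,
              (ENNReal.ofReal_lt_iff_lt_toReal hp0 h3).2 h1⟩
          · rintro ⟨h1, h2⟩
            have h3 : sigE α X s ≠ ∞ := h1.ne_top
            exact ⟨⟨(ENNReal.ofReal_lt_iff_lt_toReal hp0 h3).1 h2,
              (ENNReal.lt_ofReal_iff_toReal_lt h3).1 h1⟩, h3⟩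
        have hfinp : muI α {s : ℝ | sigE α X s ≤ ENNReal.ofReal p} ≠ ∞ := by
          rw [sigE_le_measure hX hdfin hsne hp0]
          exact ne_top_of_le_ne_top ENNReal.ofReal_ne_top (min_le_left _ _)
        have hdiff1 : muI α ({s : ℝ | sigE α X s < ENNReal.ofReal q}
            \ {s : ℝ | sigE α X s ≤ ENNReal.ofReal p})
            = muI α {s : ℝ | sigE α X s < ENNReal.ofReal q}
              - muI α {s : ℝ | sigE α X s ≤ ENNReal.ofReal p} :=
          measure_diff (fun s hs => lt_of_le_of_lt hs hofpq)
            (((measurable_sigE hX) measurableSet_Iic).nullMeasurableSet) hfinp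
        have hlhseq : Ioo (p:ℝ) (q:ℝ) = Iio (q:ℝ) \ Iic (p:ℝ) := by
          ext s
          simp only [mem_Ioo, mem_diff, mem_Iio, mem_Iic, not_le]
          tauto
        have hfinp2 : muI α (Iic (p:ℝ)) ≠ ∞ := by
          rw [muI_Iic hα]
          exact ne_top_of_le_ne_top ENNReal.ofReal_ne_top (min_le_left _ _)
        have hdiff2 : muI α (Iio (q:ℝ) \ Iic (p:ℝ))
            = muI α (Iio (q:ℝ)) - muI α (Iic (p:ℝ)) :=
          measure_diff (fun s hs => lt_of_le_of_lt (mem_Iic.1 hs) hpq)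
            measurableSet_Iic.nullMeasurableSet hfinp2
        rw [hseteq, hlhseq, hdiff1, hdiff2, muI_Iio hα, muI_Iic hα,
          sigE_lt_measure hX hdfin hsne hq0, sigE_le_measure hX hdfin hsne hp0]
  · have hempty : Ioo (p:ℝ) (q:ℝ) = ∅ := Ioo_eq_empty hpq
    rw [hempty]
    simp

lemma subcase_null (hX : Measurable X) :
    muI α {s : ℝ | 0 < |X s| ∧ volume (Aset α X (|X s|)) = 0 ∧
      distr α X (|X s|) = 0} = 0 := by
  set P := {a : ℝ | 0 < a ∧ distr α X a = 0} with hPdef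
  rcases P.eq_empty_or_nonempty with hPe | hPne
  · have hempty : {s : ℝ | 0 < |X s| ∧ volume (Aset α X (|X s|)) = 0 ∧
        distr α X (|X s|) = 0} = ∅ := by
      ext s
      simp only [mem_setOf_eq, mem_empty_iff_false, iff_false, not_and]
      intro h1 _ h3
      have : |X s| ∈ P := ⟨h1, h3⟩
      rw [hPe] at this
      exact this
    rw [hempty]
    exact measure_empty
  · have hbdd : BddBelow P := ⟨0, fun a ha => ha.1.le⟩
    set astar := sInf P with hasdef
    have hastar0 : 0 ≤ astar := le_csInf hPne (fun a ha => ha.1.le)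
    have hdstar : distr α X astar = 0 := by
      refine le_antisymm ?_ zero_le
      rw [distr_right_continuous]
      refine iSup_le (fun n => ?_)
      have h0 : (0:ℝ) < ((n:ℝ)+1)⁻¹ := by positivity
      obtain ⟨a, haP, halt⟩ := exists_lt_of_csInf_lt hPne
        (show astar < astar + ((n:ℝ)+1)⁻¹ by linarith)
      calc distr α X (astar + ((n:ℝ)+1)⁻¹) ≤ distr α X a := distr_anti halt.le
        _ = 0 := haP.2
    have hsub : {s : ℝ | 0 < |X s| ∧ volume (Aset α X (|X s|)) = 0 ∧
        distr α X (|X s|) = 0} ⊆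
        {s : ℝ | astar < |X s|} ∪ {s : ℝ | |X s| = astar ∧ volume (Aset α X astar) = 0} := by
      rintro s ⟨h1, h2, h3⟩
      have hmem : |X s| ∈ P := ⟨h1, h3⟩
      have hle : astar ≤ |X s| := csInf_le hbdd hmem
      rcases lt_or_eq_of_le hle with h | h
      · exact Or.inl h
      · exact Or.inr ⟨h.symm, h ▸ h2⟩
    refine measure_mono_null hsub (measure_union_null ?_ ?_)
    · exact hdstar
    · classical
      exact cond_level_null _ id

lemma badd_null (hX : Measurable X)
    (hdfin : ∀ lam : ℝ, 0 < lam → distr α X lam ≠ ∞) :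
    muI α {s : ℝ | 0 < |X s| ∧ volume (Aset α X (|X s|)) = 0 ∧
      ∃ a' : ℝ, 0 < a' ∧ a' < |X s| ∧ distr α X a' = distr α X (|X s|)} = 0 := by
  classical
  have hcover : {s : ℝ | 0 < |X s| ∧ volume (Aset α X (|X s|)) = 0 ∧
      ∃ a' : ℝ, 0 < a' ∧ a' < |X s| ∧ distr α X a' = distr α X (|X s|)} ⊆
      (⋃ q : ℚ, (if 0 < (q:ℝ) ∧ distr α X (q:ℝ) ≠ 0 then
        {s : ℝ | (q:ℝ) < |X s| ∧ volume (Aset α X (|X s|)) = 0 ∧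
          distr α X (|X s|) = distr α X (q:ℝ)} else ∅))
      ∪ {s : ℝ | 0 < |X s| ∧ volume (Aset α X (|X s|)) = 0 ∧
          distr α X (|X s|) = 0} := by
    rintro s ⟨h1, h2, a', ha'1, ha'2, ha'3⟩
    obtain ⟨q, hq1, hq2⟩ := exists_rat_btwn ha'2
    have hq0 : (0:ℝ) < (q:ℝ) := lt_trans ha'1 hq1
    have hdq : distr α X (q:ℝ) = distr α X (|X s|) := by
      refine le_antisymm ?_ ?_
      · rw [← ha'3]
        exact distr_anti hq1.le
      · exact distr_anti hq2.le
    by_cases hdq0 : distr α X (q:ℝ) = 0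
    · right
      exact ⟨h1, h2, by rw [← hdq, hdq0]⟩
    · left
      refine mem_iUnion.2 ⟨q, ?_⟩
      rw [if_pos ⟨hq0, hdq0⟩]
      exact ⟨hq2, h2, hdq.symm⟩
  refine measure_mono_null hcover (measure_union_null ?_ (subcase_null hX))
  refine measure_iUnion_null (fun q => ?_)
  by_cases hcond : 0 < (q:ℝ) ∧ distr α X (q:ℝ) ≠ 0
  · rw [if_pos hcond]
    exact J_null hX hdfin hcond.1.le hcond.2
  · rw [if_neg hcond]
    exact measure_empty

lemma sigE_rearr_ae (hX : Measurable X)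
    (hdfin : ∀ lam : ℝ, 0 < lam → distr α X lam ≠ ∞) :
    ∀ᵐ s ∂(muI α), |X s| =
      (if sigE α X s = ∞ then 0 else rearr α X ((sigE α X s).toReal)) := by
  filter_upwards [measure_eq_zero_iff_ae_notMem.1 (loc_lt_ae (α := α) hX),
    measure_eq_zero_iff_ae_notMem.1 (badd_null hX hdfin)] with s h1 h2
  have h1' : volume (Aset α X (|X s|)) ≠ 0 →
      Lloc α X s < volume (Aset α X (|X s|)) := by
    intro hA
    by_contra hL
    exact h1 ⟨hA, hL⟩
  rcases eq_or_lt_of_le (abs_nonneg (X s)) with h0 | h0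
  · by_cases hinf : sigE α X s = ∞
    · rw [if_pos hinf]
      exact h0.symm
    · rw [if_neg hinf]
      have hcond : distr α X 0 ≤ ENNReal.ofReal ((sigE α X s).toReal) := by
        rw [ENNReal.ofReal_toReal hinf]
        have : distr α X 0 = distr α X (|X s|) := by rw [← h0]
        rw [this]
        exact le_self_add
      rw [rearr_eq_zero hcond]
      exact h0.symm
  · have hne : sigE α X s ≠ ∞ := sigE_ne_top_of_pos hX hdfin h0
    rw [if_neg hne]
    have hofr : ENNReal.ofReal ((sigE α X s).toReal) = sigE α X s :=
      ENNReal.ofReal_toReal hne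
    have hub : rearr α X ((sigE α X s).toReal) ≤ |X s| :=
      rearr_le h0 (by rw [hofr]; exact le_self_add)
    have hlb : |X s| ≤ rearr α X ((sigE α X s).toReal) := by
      have hSne : (Sset α X ((sigE α X s).toReal)).Nonempty :=
        ⟨|X s|, h0, by rw [hofr]; exact le_self_add⟩
      refine le_csInf hSne ?_
      rintro b ⟨hb0, hble⟩
      by_contra hcon
      push_neg at hcon
      rw [hofr] at hble
      have hgoal : sigE α X s < distr α X b := by
        have hge : muI α {u : ℝ | |X s| ≤ |X u|} ≤ distr α X b :=
          measure_mono (fun u hu => lt_of_lt_of_le hcon hu)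
        by_cases hA : volume (Aset α X (|X s|)) = 0
        · have hL0 : Lloc α X s = 0 :=
            le_antisymm (le_trans (Lloc_le X s) (le_of_eq hA)) zero_le
          have hsig : sigE α X s = distr α X (|X s|) := by
            show distr α X (|X s|) + Lloc α X s = _
            rw [hL0, add_zero]
          rw [hsig]
          have hnb : distr α X b ≠ distr α X (|X s|) := by
            intro hcontra
            exact h2 ⟨h0, hA, b, hb0, hcon, hcontra⟩
          exact lt_of_le_of_ne (distr_anti hcon.le) (Ne.symm hnb)
        · have hL : Lloc α X s < volume (Aset α X (|X s|)) := h1' hA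
          calc sigE α X s < distr α X (|X s|) + volume (Aset α X (|X s|)) :=
                ENNReal.add_lt_add_left (hdfin _ h0) hL
            _ = muI α {u : ℝ | |X s| ≤ |X u|} := (measure_abs_ge hX _).symm
            _ ≤ distr α X b := hge
      exact absurd hble (not_le.2 hgoal)
    exact le_antisymm hlb hub

end Sigma

end Aux


namespace Aux

variable {α : ℝ≥0∞} {x : ℝ → ℝ}

lemma distr_of_neg {g : ℝ → ℝ} {lam : ℝ} (h : lam < 0) :
    distr α g lam = muI α univ := by
  unfold distr
  congr 1
  ext s
  simp [lt_of_lt_of_le h (abs_nonneg _)]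

lemma member_not_huge (E : SymmetricBFS α) (hx : E.Mem x) :
    ∃ lam : ℝ, 0 < lam ∧ distr α x lam ≠ ∞ := by
  by_contra hcon
  push_neg at hcon
  have hdeq : distr α ((2:ℝ) • x) = distr α x := by
    funext lam
    rcases lt_trichotomy lam 0 with h | h | h
    · rw [distr_of_neg h, distr_of_neg h]
    · subst h
      unfold distr
      congr 1
      ext s
      simp only [Pi.smul_apply, smul_eq_mul, mem_setOf_eq, abs_mul]
      constructor
      · intro h1
        by_contra h2
        push_neg at h2
        have : |x s| = 0 := le_antisymm h2 (abs_nonneg _)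
        rw [this] at h1
        simp at h1
      · intro h1
        have : |(2:ℝ)| = 2 := by norm_num
        rw [this]
        positivity
    · rw [distr_smul (by norm_num : (0:ℝ) < 2), hcon (lam/2) (by positivity),
        hcon lam h]
  obtain ⟨_, hNeq⟩ := E.symmetric
    ((E.mem_aemeasurable hx).const_smul (2:ℝ)) hx hdeq
  rw [E.norm_smul'] at hNeq
  have hN0 : E.N x = 0 := by
    have : |(2:ℝ)| = 2 := by norm_num
    rw [this] at hNeq
    linarith
  have hx0 : ∀ᵐ s ∂(muI α), x s = 0 := (E.norm_eq_zero_iff hx).1 hN0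
  have h1 : distr α x 1 = 0 := by
    have hnull : muI α {s : ℝ | ¬ x s = 0} = 0 := ae_iff.1 hx0
    refine measure_mono_null (fun s hs => ?_) hnull
    simp only [mem_setOf_eq] at hs ⊢
    intro h
    rw [h] at hs
    simp at hs
    linarith
  have := hcon 1 one_pos
  rw [h1] at this
  exact ENNReal.zero_ne_top this

lemma Sset_congr {y z : ℝ → ℝ} (h : distr α y = distr α z) (t : ℝ) :
    Sset α y t = Sset α z t := by
  unfold Sset
  rw [h]

lemma member_nonempty (E : SymmetricBFS α) (hx : E.Mem x) :
    ∀ t : ℝ, 0 < t → (Sset α x t).Nonempty := by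
  intro t ht
  obtain ⟨lam₀, hl0, hfin⟩ := member_not_huge E hx
  set x₀ := (E.mem_aemeasurable hx).mk x with hx₀def
  have hae : x =ᵐ[muI α] x₀ := (E.mem_aemeasurable hx).ae_eq_mk
  have hd : distr α x = distr α x₀ := distr_congr hae
  rw [Sset_congr hd]
  refine sset_nonempty_of (E.mem_aemeasurable hx).measurable_mk hl0 ?_ ht
  rw [← hd]
  exact hfin

lemma member_dfin (hα : α = 1 ∨ α = ∞) (E : SymmetricBFS α) (hx : E.Mem x)
    (hinf : rearrInftyZero α x) : ∀ lam : ℝ, 0 < lam → distr α x lam ≠ ∞ := by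
  rcases hα with hα | hα
  · intro lam _
    refine ne_top_of_le_ne_top ?_ distr_le_univ
    rw [muI_univ, hα]
    exact ENNReal.one_ne_top
  · by_contra hcon
    push_neg at hcon
    obtain ⟨lam₀, hl0, hfin⟩ := hcon
    have hlow : ∀ t : ℝ, 0 < t → lam₀ ≤ rearr α x t := by
      intro t ht
      refine le_csInf (member_nonempty E hx t ht) ?_
      rintro b ⟨hb0, hble⟩
      by_contra hble2
      push_neg at hble2
      have : distr α x lam₀ ≤ distr α x b := distr_anti hble2.le
      rw [hfin] at this
      have hbtop : distr α x b = ∞ := top_le_iff.1 this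
      rw [hbtop] at hble
      exact (ENNReal.ofReal_lt_top.trans_le hble).ne rfl
    have htend := hinf hα
    have hev : ∀ᶠ t in atTop, rearr α x t < lam₀ := htend.eventually_lt_const hl0
    obtain ⟨T₀, hT₀⟩ := eventually_atTop.1 hev
    have h1 := hT₀ (max T₀ 1) (le_max_left _ _)
    have h2 := hlow (max T₀ 1) (lt_of_lt_of_le one_pos (le_max_right _ _))
    linarith

lemma mem_rearr_of_mem (E : SymmetricBFS α) {y : ℝ → ℝ} (hy : E.Mem y) :
    E.Mem (rearr α y) ∧ E.N (rearr α y) = E.N y ∧ distr α (rearr α y) = distr α y := by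
  set y₀ := (E.mem_aemeasurable hy).mk y with hy₀def
  have hae : y =ᵐ[muI α] y₀ := (E.mem_aemeasurable hy).ae_eq_mk
  have hd : distr α y = distr α y₀ := distr_congr hae
  have hre : rearr α y = rearr α y₀ := rearr_congr hd
  have hne : ∀ t : ℝ, 0 < t → (Sset α y₀ t).Nonempty := by
    intro t ht
    rw [← Sset_congr hd]
    exact member_nonempty E hy t ht
  have hdr : distr α (rearr α y) = distr α y := by
    rw [hre, distr_rearr hne, ← hd]
  obtain ⟨hmem, hN⟩ := E.symmetric (measurable_rearr y).aemeasurable hy hdr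
  exact ⟨hmem, hN, hdr⟩

lemma rearr_integrable (E : SymmetricBFS α) (hx : E.Mem x) (hLKM : E.IsLKMPoint x)
    {t₁ : ℝ} (ht₁ : 0 < t₁) (hpos : 0 < rearr α x t₁) :
    ∀ T : ℝ, IntegrableOn (rearr α x) (Ioc 0 T) volume := by
  by_contra hcon
  push_neg at hcon
  obtain ⟨T₀, hT₀⟩ := hcon
  have hT₀pos : 0 < T₀ := by
    by_contra h
    push_neg at h
    rw [Ioc_eq_empty (not_lt.2 h)] at hT₀
    exact hT₀ (integrableOn_empty)
  have hanti : ∀ ⦃s t : ℝ⦄, 0 < s → s ≤ t → rearr α x t ≤ rearr α x s :=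
    fun s t hs hst => rearr_anti (member_nonempty E hx s hs) hst
  have hnone : ∀ T : ℝ, 0 < T → ¬ IntegrableOn (rearr α x) (Ioc 0 T) volume := by
    intro T hT hint
    exact hT₀ (integrableOn_Ioc_extend (measurable_rearr x) (rearr_nonneg x) hanti hT hint T₀)
  have hmaxf0 : ∀ t : ℝ, 0 < t → maxf α x t = 0 := by
    intro t ht
    unfold maxf
    rw [integral_undef (hnone t ht), zero_div]
  have h2none : ∀ t : ℝ, 0 < t →
      ¬ IntegrableOn (fun u => 2 * rearr α x u) (Ioc 0 t) volume := by
    intro t ht h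
    refine hnone t ht ?_
    have h2 := h.const_mul (2⁻¹ : ℝ)
    have heq : (fun u => (2⁻¹:ℝ) * (2 * rearr α x u)) = fun u => rearr α x u := by
      funext u; ring
    rw [heq] at h2
    exact h2
  have hre2 : rearr α ((2:ℝ) • x) = fun u => 2 * rearr α x u := by
    funext u
    exact rearr_two_smul x u
  have hmaxf2 : ∀ t : ℝ, 0 < t → maxf α ((2:ℝ) • x) t = 0 := by
    intro t ht
    unfold maxf
    rw [hre2, integral_undef (h2none t ht), zero_div]
  have hHLP : HLP α ((2:ℝ) • x) x := by
    intro t ht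
    rw [hmaxf0 t ht, hmaxf2 t ht]
  have hne : rearr α ((2:ℝ) • x) ≠ rearr α x := by
    intro heq
    have := congrFun heq t₁
    rw [hre2] at this
    simp only at this
    linarith
  have := hLKM _ (E.smul_mem 2 hx) hHLP hne
  rw [E.norm_smul'] at this
  have habs : |(2:ℝ)| = 2 := by norm_num
  rw [habs] at this
  have := E.norm_nonneg' x
  linarith

end Aux


namespace Aux

variable {α : ℝ≥0∞} {x : ℝ → ℝ}

lemma F_pos {t₀ t₁ : ℝ} (ht₁ : 0 < t₁) (h₁₀ : t₁ ≤ t₀)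
    (hanti : ∀ ⦃s t : ℝ⦄, 0 < s → s ≤ t → rearr α x t ≤ rearr α x s)
    (hpos : 0 < rearr α x t₁)
    (hint : IntegrableOn (rearr α x) (Ioc 0 t₀) volume) :
    0 < ∫ u in Ioc 0 t₀, rearr α x u := by
  have h1 : ∫ u in Ioc 0 t₁, rearr α x u ≤ ∫ u in Ioc 0 t₀, rearr α x u := by
    refine setIntegral_mono_set hint ?_ ?_
    · exact Filter.Eventually.of_forall (fun u => rearr_nonneg x u)
    · exact HasSubset.Subset.eventuallyLE (Ioc_subset_Ioc_right h₁₀)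
  have h2 : (t₁ - 0) * rearr α x t₁ ≤ ∫ u in Ioc 0 t₁, rearr α x u :=
    const_le_integral_Ioc hanti le_rfl ht₁.le
      (hint.mono_set (Ioc_subset_Ioc_right h₁₀))
  rw [sub_zero] at h2
  have h3 : 0 < t₁ * rearr α x t₁ := mul_pos ht₁ hpos
  linarith

set_option maxHeartbeats 2000000 in
lemma main_subseq (hα : α = 1 ∨ α = ∞) (E : SymmetricBFS α) (x : ℝ → ℝ) (hx : E.Mem x)
    (hinf : rearrInftyZero α x) (hLKM : E.IsLKMPoint x) (hHg : E.IsHgPoint x)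
    (w : ℕ → ℝ → ℝ) (hw : ∀ n, E.Mem (w n))
    (hae : ∀ᵐ t ∂(muI α), Tendsto (fun n => maxf α (w n) t) atTop (𝓝 (maxf α x t)))
    (hnorm : Tendsto (fun n => E.N (w n)) atTop (𝓝 (E.N x))) :
    Tendsto (fun n => E.N (rearr α (w n) - rearr α x)) atTop (𝓝 0) := by
  by_cases hNx : E.N x = 0
  · -- degenerate case : x = 0 a.e.
    have hx0 : ∀ᵐ s ∂(muI α), x s = 0 := (E.norm_eq_zero_iff hx).1 hNx
    have hd0 : distr α x 0 = 0 := by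
      have hnull : muI α {s : ℝ | ¬ x s = 0} = 0 := ae_iff.1 hx0
      refine measure_mono_null (fun s hs => ?_) hnull
      simp only [mem_setOf_eq] at hs ⊢
      intro h
      rw [h] at hs
      simp at hs
    have hrx : rearr α x = fun _ => (0:ℝ) := by
      funext t
      refine rearr_eq_zero ?_
      rw [hd0]
      exact zero_le
    have heqN : ∀ n, E.N (rearr α (w n) - rearr α x) = E.N (w n) := by
      intro n
      have h1 : rearr α (w n) - rearr α x = rearr α (w n) := by
        rw [hrx]
        funext s
        simp
      rw [h1, (mem_rearr_of_mem E (hw n)).2.1]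
    rw [show (0:ℝ) = E.N x from hNx.symm]
    exact hnorm.congr (fun n => (heqN n).symm)
  · -- main case
    have hm0 : distr α x 0 ≠ 0 := by
      intro hd0
      refine hNx ((E.norm_eq_zero_iff hx).2 ?_)
      rw [ae_iff]
      have : {s : ℝ | ¬ x s = 0} = {s : ℝ | 0 < |x s|} := by
        ext s
        simp [abs_pos]
      rw [this]
      exact hd0
    set x₀ := (E.mem_aemeasurable hx).mk x with hx₀def
    have hxae : x =ᵐ[muI α] x₀ := (E.mem_aemeasurable hx).ae_eq_mk
    have hx₀m : Measurable x₀ := (E.mem_aemeasurable hx).measurable_mk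
    have hdeq : distr α x = distr α x₀ := distr_congr hxae
    have hreq : rearr α x = rearr α x₀ := rearr_congr hdeq
    have hdfinx : ∀ lam : ℝ, 0 < lam → distr α x lam ≠ ∞ := member_dfin hα E hx hinf
    have hdfin : ∀ lam : ℝ, 0 < lam → distr α x₀ lam ≠ ∞ := by
      intro lam hl
      rw [← hdeq]
      exact hdfinx lam hl
    have hsnex : ∀ t : ℝ, 0 < t → (Sset α x t).Nonempty := member_nonempty E hx
    have hsne₀ : ∀ t : ℝ, 0 < t → (Sset α x₀ t).Nonempty := by
      intro t ht
      rw [← Sset_congr hdeq]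
      exact hsnex t ht
    have hanti_x : ∀ ⦃s t : ℝ⦄, 0 < s → s ≤ t → rearr α x t ≤ rearr α x s :=
      fun s t hs hst => rearr_anti (hsnex s hs) hst
    -- choice of t₁ with rearr α x t₁ > 0
    have hex_t₁ : ∃ t₁ : ℝ, 0 < t₁ ∧ ENNReal.ofReal t₁ < distr α x 0 ∧
        ENNReal.ofReal t₁ < α := by
      by_cases hm : distr α x 0 = ∞
      · refine ⟨1, one_pos, ?_, ?_⟩
        · rw [hm]; exact ENNReal.ofReal_lt_top
        · have h1 : muI α univ = ∞ := top_le_iff.1 (hm ▸ distr_le_univ)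
          rw [muI_univ] at h1
          rw [h1]
          exact ENNReal.ofReal_lt_top
      · have htr : 0 < (distr α x 0).toReal := ENNReal.toReal_pos hm0 hm
        have h1 : ENNReal.ofReal ((distr α x 0).toReal / 2)
            < ENNReal.ofReal ((distr α x 0).toReal) := by
          rw [ENNReal.ofReal_lt_ofReal_iff htr]
          linarith
        rw [ENNReal.ofReal_toReal hm] at h1
        refine ⟨(distr α x 0).toReal / 2, by positivity, h1, ?_⟩
        exact lt_of_lt_of_le h1 (le_trans distr_le_univ (le_of_eq (muI_univ α)))
    obtain ⟨t₁, ht₁, ht₁m, ht₁α⟩ := hex_t₁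
    have hq1 : 0 < rearr α x t₁ := rearr_pos (hsnex t₁ ht₁) ht₁m
    have hint_x : ∀ T : ℝ, IntegrableOn (rearr α x) (Ioc 0 T) volume :=
      rearr_integrable E hx hLKM ht₁ hq1
    -- the set of good points
    set D := {t : ℝ | 0 < t ∧ ENNReal.ofReal t < α ∧
      Tendsto (fun n => maxf α (w n) t) atTop (𝓝 (maxf α x t))} with hDdef
    have hD0 : D ⊆ Ioi 0 := fun t ht => ht.1
    have hDrange : ∀ u ∈ D, ENNReal.ofReal u < α := fun u hu => hu.2.1
    have hDae : ∀ᵐ t ∂(muI α), t ∈ D := by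
      filter_upwards [hae, ae_pos_muI α, ae_restrict_mem (measurableSet_Iset α)]
        with t h1 h2 h3
      exact ⟨h2, h3.2, h1⟩
    have hDc : muI α Dᶜ = 0 := ae_iff.1 hDae
    have hDdense : ∀ a b : ℝ, 0 < a → a < b → ENNReal.ofReal a < α →
        (D ∩ Ioo a b).Nonempty := by
      intro a b ha hab haα
      by_contra hcon
      rw [not_nonempty_iff_eq_empty] at hcon
      rcases hα with hα1 | hα1
      · have ha1 : a < 1 := by
          rw [hα1, ENNReal.ofReal_lt_one] at haα
          exact haα
        set b' := min b 1 with hb'def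
        have hab' : a < b' := lt_min hab ha1
        have hsub : Ioo a b' ⊆ Dᶜ := by
          intro t ht
          intro htD
          have htIoo : t ∈ Ioo a b := ⟨ht.1, lt_of_lt_of_le ht.2 (min_le_left _ _)⟩
          have : t ∈ D ∩ Ioo a b := ⟨htD, htIoo⟩
          rw [hcon] at this
          exact this
        have h1 : muI α (Ioo a b') ≤ 0 := hDc ▸ measure_mono hsub
        have h2 : muI α (Ioo a b') = ENNReal.ofReal (b' - a) := by
          rw [muI_apply]
          have : Ioo a b' ∩ Iset α = Ioo a b' := by
            refine inter_eq_left.2 (fun t ht => ?_)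
            refine ⟨le_of_lt (lt_trans ha ht.1), ?_⟩
            rw [hα1, ENNReal.ofReal_lt_one]
            exact lt_of_lt_of_le ht.2 (min_le_right _ _)
          rw [this, Real.volume_Ioo]
        rw [h2] at h1
        have h3 : ENNReal.ofReal (b' - a) ≠ 0 := by
          simp only [ne_eq, ENNReal.ofReal_eq_zero, not_le]
          linarith
        exact h3 (le_antisymm h1 zero_le)
      · have hsub : Ioo a b ⊆ Dᶜ := by
          intro t ht htD
          have : t ∈ D ∩ Ioo a b := ⟨htD, ht⟩
          rw [hcon] at this
          exact this
        have h1 : muI α (Ioo a b) ≤ 0 := hDc ▸ measure_mono hsub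
        have h2 : muI α (Ioo a b) = ENNReal.ofReal (b - a) := by
          rw [muI_apply]
          have : Ioo a b ∩ Iset α = Ioo a b := by
            refine inter_eq_left.2 (fun t ht => ?_)
            refine ⟨le_of_lt (lt_trans ha ht.1), ?_⟩
            rw [hα1]
            exact ENNReal.ofReal_lt_top
          rw [this, Real.volume_Ioo]
        rw [h2] at h1
        have h3 : ENNReal.ofReal (b - a) ≠ 0 := by
          simp only [ne_eq, ENNReal.ofReal_eq_zero, not_le]
          linarith
        exact h3 (le_antisymm h1 zero_le)
    have hFconv : ∀ t ∈ D, Tendsto (fun n => ∫ u in Ioc 0 t, rearr α (w n) u) atTop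
        (𝓝 (∫ u in Ioc 0 t, rearr α x u)) := by
      rintro t ⟨ht, _, hmaxc⟩
      have hF : ∀ g : ℝ → ℝ, (∫ u in Ioc 0 t, rearr α g u) = t * maxf α g t := by
        intro g
        rw [maxf]
        field_simp
      rw [hF x]
      have := hmaxc.const_mul t
      refine this.congr (fun n => ?_)
      rw [hF (w n)]
    have hvanti : ∀ n, ∀ ⦃s t : ℝ⦄, 0 < s → s ≤ t → rearr α (w n) t ≤ rearr α (w n) s :=
      fun n s t hs hst => rearr_anti (member_nonempty E (hw n) s hs) hst
    have hvint : ∀ᶠ n in atTop, ∀ T : ℝ, IntegrableOn (rearr α (w n)) (Ioc 0 T) volume := by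
      obtain ⟨t₀, ht₀D, ht₀mem⟩ := hDdense t₁ (t₁ + 1) ht₁ (by linarith) ht₁α
      have hFpos : 0 < ∫ u in Ioc 0 t₀, rearr α x u :=
        F_pos ht₁ ht₀mem.1.le hanti_x hq1 (hint_x t₀)
      have hFne := (hFconv t₀ ht₀D).eventually_ne hFpos.ne'
      filter_upwards [hFne] with n hn
      have hint0 : IntegrableOn (rearr α (w n)) (Ioc 0 t₀) volume := by
        by_contra hni
        rw [integral_undef hni] at hn
        exact hn rfl
      exact fun T => integrableOn_Ioc_extend (measurable_rearr (w n)) (rearr_nonneg (w n))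
        (hvanti n) (lt_trans ht₁ ht₀mem.1) hint0 T
    have hptw : ∀ t : ℝ, 0 < t → ENNReal.ofReal t < α → ContinuousAt (rearr α x) t →
        Tendsto (fun n => rearr α (w n) t) atTop (𝓝 (rearr α x t)) := by
      intro t ht htα hcont
      exact ptwise_conv (fun n u => rearr_nonneg (w n) u) hvanti hanti_x hint_x
        hD0 hDrange hFconv hDdense hvint ht htα hcont
    have hTIM : TendstoInMeasure (muI α) (fun n => rearr α (w n)) atTop (rearr α x) :=
      tendstoInMeasure_of_ptwise hα (fun n => measurable_rearr (w n))
        (fun n u => rearr_nonneg (w n) u) hvanti (measurable_rearr x)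
        (rearr_nonneg x) hanti_x hptw hinf
    -- transfer stage
    set sg : ℝ → ℝ := fun s => if x₀ s < 0 then (-1:ℝ) else 1 with hsgdef
    have hsgm : Measurable sg := by
      exact Measurable.ite (hx₀m measurableSet_Iio) measurable_const measurable_const
    have hsgabs : ∀ s, |sg s| = 1 := by
      intro s
      simp only [hsgdef]
      split <;> simp
    have hsgx : ∀ s, x₀ s = sg s * |x₀ s| := by
      intro s
      simp only [hsgdef]
      split
      · rename_i h
        rw [abs_of_neg h]
        ring
      · rename_i h
        rw [abs_of_nonneg (not_lt.1 h)]
        ring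
    set Y : ℕ → ℝ → ℝ := fun n s => sg s *
      (if sigE α x₀ s = ∞ then 0 else rearr α (w n) ((sigE α x₀ s).toReal)) with hYdef
    have hmap := map_sigE hα hx₀m hdfin hsne₀
    have hTrans : ∀ G : Set ℝ, MeasurableSet G →
        muI α {s : ℝ | sigE α x₀ s ≠ ∞ ∧ (sigE α x₀ s).toReal ∈ G} = muI α G := by
      intro G hG
      have h1 : {s : ℝ | sigE α x₀ s ≠ ∞ ∧ (sigE α x₀ s).toReal ∈ G}
          = (sigR α x₀ ⁻¹' G) ∩ {s : ℝ | sigE α x₀ s ≠ ∞} := by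
        ext s
        simp only [mem_inter_iff, mem_preimage, mem_setOf_eq, sigR]
        tauto
      rw [h1, ← Measure.restrict_apply ((measurable_sigR hx₀m) hG),
        ← Measure.map_apply (measurable_sigR hx₀m) hG, hmap]
    have hdistr_gen : ∀ h : ℝ → ℝ, Measurable h →
        distr α (fun s => sg s * (if sigE α x₀ s = ∞ then 0
          else h ((sigE α x₀ s).toReal))) = distr α h := by
      intro h hhm
      funext lam
      rcases lt_or_ge lam 0 with hlam | hlam
      · rw [distr_of_neg hlam, distr_of_neg hlam]
      · have hset : {s : ℝ | lam < |sg s * (if sigE α x₀ s = ∞ then 0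
            else h ((sigE α x₀ s).toReal))|}
            = {s : ℝ | sigE α x₀ s ≠ ∞ ∧ (sigE α x₀ s).toReal ∈ {u : ℝ | lam < |h u|}} := by
          ext s
          simp only [mem_setOf_eq, abs_mul, hsgabs s, one_mul]
          by_cases hσ : sigE α x₀ s = ∞
          · rw [if_pos hσ]
            simp only [abs_zero]
            constructor
            · intro hcon2
              exact absurd hcon2 (not_lt.2 hlam)
            · rintro ⟨hcon2, _⟩
              exact absurd hσ hcon2
          · rw [if_neg hσ]
            exact ⟨fun hh => ⟨hσ, hh⟩, fun hh => hh.2⟩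
        calc distr α _ lam
            = muI α {s : ℝ | sigE α x₀ s ≠ ∞ ∧ (sigE α x₀ s).toReal ∈ {u : ℝ | lam < |h u|}} := by
              unfold distr
              rw [hset]
          _ = muI α {u : ℝ | lam < |h u|} := hTrans _ ((hhm.abs) measurableSet_Ioi)
          _ = distr α h lam := rfl
    have hw₀ : ∀ n, distr α (rearr α (w n)) = distr α (w n) :=
      fun n => (mem_rearr_of_mem E (hw n)).2.2
    have hYdistr : ∀ n, distr α (Y n) = distr α (w n) := by
      intro n
      exact (hdistr_gen _ (measurable_rearr (w n))).trans (hw₀ n)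
    have hYmem : ∀ n, E.Mem (Y n) ∧ E.N (Y n) = E.N (w n) := by
      intro n
      refine E.symmetric ?_ (hw n) (hYdistr n)
      refine (hsgm.mul ?_).aemeasurable
      refine Measurable.ite ?_ measurable_const ?_
      · exact (measurable_sigE hx₀m) (measurableSet_singleton ∞)
      · exact (measurable_rearr (w n)).comp ((measurable_sigE hx₀m).ennreal_toReal)
    have hsig_ae := sigE_rearr_ae hx₀m hdfin
    have hsub_ae : ∀ n, (fun s => Y n s - x₀ s) =ᵐ[muI α]
        (fun s => sg s * (if sigE α x₀ s = ∞ then 0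
          else (rearr α (w n) ((sigE α x₀ s).toReal)
            - rearr α x₀ ((sigE α x₀ s).toReal)))) := by
      intro n
      filter_upwards [hsig_ae] with s hs
      by_cases hσ : sigE α x₀ s = ∞
      · rw [if_pos hσ] at hs
        have hx00 : x₀ s = 0 := abs_eq_zero.1 hs
        show Y n s - x₀ s = sg s * _
        rw [if_pos hσ, hx00]
        simp only [hYdef]
        rw [if_pos hσ]
        ring
      · rw [if_neg hσ] at hs
        show Y n s - x₀ s = sg s * _
        rw [if_neg hσ]
        have hx0eq : x₀ s = sg s * rearr α x₀ ((sigE α x₀ s).toReal) := by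
          rw [hsgx s, hs]
        simp only [hYdef]
        rw [if_neg hσ, hx0eq]
        ring
    have hdistr_sub : ∀ n, distr α (Y n - x) = distr α (rearr α (w n) - rearr α x) := by
      intro n
      have h1 : (Y n - x) =ᵐ[muI α] (fun s => Y n s - x₀ s) := by
        filter_upwards [hxae] with s hs
        show Y n s - x s = Y n s - x₀ s
        rw [hs]
      have h2 := distr_congr ((h1.trans (hsub_ae n)))
      have h3 : (fun u => rearr α (w n) u - rearr α x₀ u)
          = rearr α (w n) - rearr α x := by
        rw [hreq]
        rfl
      have hd := hdistr_gen (fun u => rearr α (w n) u - rearr α x₀ u)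
        ((measurable_rearr (w n)).sub (measurable_rearr x₀))
      have hbeta : (fun s => sg s * (if sigE α x₀ s = ∞ then 0
          else (fun u => rearr α (w n) u - rearr α x₀ u) ((sigE α x₀ s).toReal)))
          = (fun s => sg s * (if sigE α x₀ s = ∞ then 0
          else (rearr α (w n) ((sigE α x₀ s).toReal)
            - rearr α x₀ ((sigE α x₀ s).toReal)))) := rfl
      rw [hbeta] at hd
      rw [h2, hd, h3]
    have hTIMY : TendstoInMeasure (muI α) Y atTop x := by
      rw [tendstoInMeasure_iff_dist]
      intro ε hε
      have hGmeas : ∀ n, MeasurableSet {u : ℝ | ε ≤ dist (rearr α (w n) u) (rearr α x u)} := by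
        intro n
        exact ((measurable_rearr (w n)).dist (measurable_rearr x)) measurableSet_Ici
      have hkey : ∀ n, muI α {s | ε ≤ dist (Y n s) (x s)}
          = muI α {u | ε ≤ dist (rearr α (w n) u) (rearr α x u)} := by
        intro n
        have h1 : {s : ℝ | ε ≤ dist (Y n s) (x s)} =ᵐ[muI α]
            {s : ℝ | sigE α x₀ s ≠ ∞ ∧ (sigE α x₀ s).toReal ∈
              {u : ℝ | ε ≤ dist (rearr α (w n) u) (rearr α x u)}} := by
          filter_upwards [hxae, hsub_ae n] with s hs1 hs2
          change (ε ≤ dist (Y n s) (x s)) = _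
          have hYx : Y n s - x s = Y n s - x₀ s := by rw [hs1]
          apply propext
          by_cases hσ : sigE α x₀ s = ∞
          · constructor
            · intro hcon2
              exfalso
              rw [Real.dist_eq, hYx, hs2, if_pos hσ, mul_zero, abs_zero] at hcon2
              linarith
            · rintro ⟨hcon2, _⟩
              exact absurd hσ hcon2
          · rw [Real.dist_eq, hYx, hs2, if_neg hσ]
            rw [abs_mul, hsgabs s, one_mul]
            constructor
            · intro hh
              refine ⟨hσ, ?_⟩
              show ε ≤ dist _ _
              rw [Real.dist_eq, hreq]
              exact hh
            · rintro ⟨_, hh⟩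
              have hh2 : ε ≤ dist (rearr α (w n) ((sigE α x₀ s).toReal))
                  (rearr α x ((sigE α x₀ s).toReal)) := hh
              rw [Real.dist_eq, hreq] at hh2
              exact hh2
        rw [measure_congr h1, hTrans _ (hGmeas n)]
      have := tendstoInMeasure_iff_dist.1 hTIM ε hε
      exact this.congr (fun n => (hkey n).symm)
    have hNY : Tendsto (fun n => E.N (Y n)) atTop (𝓝 (E.N x)) :=
      hnorm.congr (fun n => ((hYmem n).2).symm)
    have happ := hHg Y (fun n => (hYmem n).1) hTIMY hNY
    have hfinal : ∀ n, E.N (rearr α (w n) - rearr α x) = E.N (Y n - x) := by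
      intro n
      have hmemYx : E.Mem (Y n - x) := by
        have h1 := E.add_mem (hYmem n).1 (E.smul_mem (-1) hx)
        have h2 : Y n + (-1:ℝ) • x = Y n - x := by
          funext s
          simp [sub_eq_add_neg]
        rwa [h2] at h1
      exact (E.symmetric ((measurable_rearr (w n)).sub (measurable_rearr x)).aemeasurable
        hmemYx (hdistr_sub n).symm).2
    exact happ.congr (fun n => (hfinal n).symm)


end Aux

/-- If `x*(∞) = 0` and `x` is an `LKM` point and an `H_g` point, then for
every sequence with `x_n** → x**` in measure and `‖x_n‖_E → ‖x‖_E` one has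
`‖x_n* − x*‖_E → 0`. -/
theorem lkm_and_hg_implies_maxf_convergence (α : ℝ≥0∞) (hα : α = 1 ∨ α = ∞)
    (E : SymmetricBFS α) (x : ℝ → ℝ) (hx : E.Mem x)
    (hinf : rearrInftyZero α x)
    (hLKM : E.IsLKMPoint x) (hHg : E.IsHgPoint x) :
    ∀ u : ℕ → ℝ → ℝ, (∀ n, E.Mem (u n)) →
      TendstoInMeasure (muI α) (fun n => maxf α (u n)) atTop (maxf α x) →
      Tendsto (fun n => E.N (u n)) atTop (𝓝 (E.N x)) →
      Tendsto (fun n => E.N (rearr α (u n) - rearr α x)) atTop (𝓝 0) := by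
  intro u hu hmeas hnorm
  by_contra hcon
  rw [Metric.tendsto_atTop] at hcon
  push_neg at hcon
  obtain ⟨ε, hε, hfreq⟩ := hcon
  have hfreq' : ∃ᶠ n in atTop, ε ≤ dist (E.N (rearr α (u n) - rearr α x)) 0 :=
    Filter.frequently_atTop.2 hfreq
  obtain ⟨φ, hφmono, hφ⟩ := Filter.extraction_of_frequently_atTop hfreq'
  have hsubTIM : TendstoInMeasure (muI α) (fun k => maxf α (u (φ k))) atTop (maxf α x) :=
    fun ε' hε' => (hmeas ε' hε').comp (hφmono.tendsto_atTop)
  obtain ⟨ψ, hψmono, hψae⟩ := hsubTIM.exists_seq_tendsto_ae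
  have hmain := Aux.main_subseq hα E x hx hinf hLKM hHg (fun i => u (φ (ψ i)))
    (fun i => hu _) hψae
    (hnorm.comp ((hφmono.comp hψmono).tendsto_atTop))
  rw [Metric.tendsto_atTop] at hmain
  obtain ⟨N, hN⟩ := hmain ε hε
  have h1 := hN N le_rfl
  have h2 := hφ (ψ N)
  exact absurd h1 (not_lt.2 h2)
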